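/- arXiv:1202.2481 — 5 statements merged into one kernel-verified Lean document; each statement's English description precedes it below -/
import Mathlib

section
/- If 0 → A^n → A^{n−1} → ... → A^1 → A^0 → 0 is an exact sequence of exact chain complexes of R-modules, then for every integer m there is an induced exact sequence of modules 0 → Z_m(A^n) → Z_m(A^{n−1}) → ... → Z_m(A^1) → Z_m(A^0) → 0. -/
open CategoryTheory Limits

/-- A chain map sends cycles to cycles. -/
lemma chainMap_mapsTo_cycles {R : Type} [Ring R] {K L : ChainComplex (ModuleCat R) ℤ}
    (φ : K ⟶ L) (m : ℤ) :
    ∀ x ∈ LinearMap.ker (K.d m (m - 1)).hom, (φ.f m).hom x ∈ LinearMap.ker (L.d m (m - 1)).hom := by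
  intro x hx
  rw [LinearMap.mem_ker] at hx ⊢
  have h := congrArg (fun g => g.hom x) (φ.comm m (m - 1))
  simp only [ModuleCat.hom_comp, LinearMap.comp_apply] at h
  rw [show (L.d m (m - 1)).hom ((φ.f m).hom x) = (φ.f (m - 1)).hom ((K.d m (m - 1)).hom x) from h, hx,
    map_zero]

/-- An exact sequence of chain complexes `0 → A^n → ⋯ → A^1 → A^0 → 0`, encoded as an
`ℕ`-indexed degreewise exact sequence which vanishes in degrees `> n`. -/
structure ComplexSequence (R : Type) [Ring R] (n : ℕ) where
  A : ℕ → ChainComplex (ModuleCat R) ℤ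
  d : ∀ i : ℕ, A (i + 1) ⟶ A i
  surj : ∀ m : ℤ, Function.Surjective ((d 0).f m)
  exact : ∀ (i : ℕ) (m : ℤ), Function.Exact ((d (i + 1)).f m) ((d i).f m)
  bounded : ∀ i : ℕ, n < i → ∀ m : ℤ, Subsingleton ((A i).X m)

/-- In an exact complex, every cycle is a boundary. -/
lemma exactAt_surj_aux {R : Type} [Ring R] (K : ChainComplex (ModuleCat R) ℤ) (p m : ℤ)
    (hp : p = m + 1) (h : K.ExactAt m) (x : K.X m) (hx : K.d m (m - 1) x = 0) :
    ∃ y : K.X p, K.d p m y = x := by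
  subst hp
  rw [HomologicalComplex.exactAt_iff' K (m + 1) m (m - 1) (by simp) (by simp)] at h
  exact (ShortComplex.moduleCat_exact_iff _).mp h x hx

/-- Key diagram chase: any cycle of `A^j` which is in the image of `(d j).f` is the image
of a cycle of `A^{j+1}`. Proved by downward induction (on `k` with `n < j + k`). -/
lemma cycles_lift_aux {R : Type} [Ring R] {n : ℕ} (S : ComplexSequence R n)
    (hA : ∀ (i : ℕ) (m : ℤ), (S.A i).ExactAt m) :
    ∀ (k j : ℕ), n < j + k → ∀ (m : ℤ) (z : (S.A j).X m),
      (S.A j).d m (m - 1) z = 0 → (∃ y, (S.d j).f m y = z) →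
      ∃ w, (S.A (j + 1)).d m (m - 1) w = 0 ∧ (S.d j).f m w = z := by
  intro k
  induction k with
  | zero =>
    intro j hj m z hz _
    have := S.bounded j (by omega) m
    refine ⟨0, by simp, ?_⟩
    rw [Subsingleton.elim z ((S.d j).f m 0)]
  | succ k ih =>
    intro j hj m z hz hy
    obtain ⟨y, hy⟩ := hy
    -- dy is a cycle of A^{j+1} at m-1, killed by (d j).f
    have hcomm : (S.d j).f (m - 1) ((S.A (j+1)).d m (m-1) y)
        = (S.A j).d m (m-1) ((S.d j).f m y) :=
      (ConcreteCategory.congr_hom ((S.d j).comm m (m-1)) y).symm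
    have hdy0 : (S.d j).f (m - 1) ((S.A (j+1)).d m (m-1) y) = 0 := by
      rw [hcomm, hy, hz]
    have hdy_cyc : (S.A (j+1)).d (m-1) (m-1-1) ((S.A (j+1)).d m (m-1) y) = 0 := by
      have h0 := ConcreteCategory.congr_hom ((S.A (j+1)).d_comp_d m (m-1) (m-1-1)) y
      exact h0
    have hdy_im : ∃ u, (S.d (j+1)).f (m-1) u = (S.A (j+1)).d m (m-1) y :=
      (S.exact j (m-1) _).mp hdy0
    obtain ⟨v, hv_cyc, hv⟩ := ih (j+1) (by omega) (m-1) _ hdy_cyc hdy_im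
    -- v is a cycle of A^{j+2} at m-1, lift it via exactness of A^{j+2}
    obtain ⟨t, ht⟩ := exactAt_surj_aux (S.A (j+2)) m (m-1) (by ring) (hA (j+2) (m-1)) v hv_cyc
    refine ⟨y - (S.d (j+1)).f m t, ?_, ?_⟩
    · have hcomm2 : (S.A (j+1)).d m (m-1) ((S.d (j+1)).f m t)
          = (S.d (j+1)).f (m-1) ((S.A (j+2)).d m (m-1) t) :=
        ConcreteCategory.congr_hom ((S.d (j+1)).comm m (m-1)) t
      rw [map_sub, hcomm2, ht, hv, sub_self]
    · rw [map_sub, hy, (S.exact j m).apply_apply_eq_zero t, sub_zero]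

/-- If `0 → A^n → A^{n-1} → ⋯ → A^1 → A^0 → 0` is an exact sequence of exact chain
complexes of `R`-modules, then for every integer `m` the induced sequence of cycle modules
`0 → Z_m(A^n) → ⋯ → Z_m(A^1) → Z_m(A^0) → 0`, given by the restrictions of the chain
maps, is exact. -/
theorem cycles_exact_of_exact_sequence_of_exact_complexes (R : Type) [Ring R] (n : ℕ)
    (S : ComplexSequence R n) (hA : ∀ (i : ℕ) (m : ℤ), (S.A i).ExactAt m) (m : ℤ) :
    Function.Surjective (((S.d 0).f m).hom.restrict (chainMap_mapsTo_cycles (S.d 0) m)) ∧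
    ∀ i : ℕ, Function.Exact
      (((S.d (i + 1)).f m).hom.restrict (chainMap_mapsTo_cycles (S.d (i + 1)) m))
      (((S.d i).f m).hom.restrict (chainMap_mapsTo_cycles (S.d i) m)) := by
  constructor
  · rintro ⟨z, hz⟩
    obtain ⟨y, hy⟩ := S.surj m z
    obtain ⟨w, hw, hfw⟩ := cycles_lift_aux S hA (n+1) 0 (by omega) m z hz ⟨y, hy⟩
    exact ⟨⟨w, hw⟩, Subtype.ext hfw⟩
  · intro i
    rintro ⟨x, hx⟩
    constructor
    · intro h0
      have hx0 : (S.d i).f m x = 0 := by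
        have h1 := congrArg Subtype.val h0
        simpa [LinearMap.restrict_apply] using h1
      obtain ⟨y, hy⟩ := (S.exact i m x).mp hx0
      obtain ⟨w, hw, hfw⟩ := cycles_lift_aux S hA (n+1) (i+1) (by omega) m x hx ⟨y, hy⟩
      exact ⟨⟨w, hw⟩, Subtype.ext hfw⟩
    · rintro ⟨⟨w, hw⟩, hfw⟩
      apply Subtype.ext
      have h1 := congrArg Subtype.val hfw
      simp only [LinearMap.restrict_apply] at h1 ⊢
      rw [← h1]
      exact (S.exact i m).apply_apply_eq_zero w
end

section
/- A chain complex X of R-modules is exact with Z_m(X) of projective dimension at most n for every m if and only if X has projective dimension at most n in the category of chain complexes, i.e., there is an exact sequence 0 → P^n → ... → P^0 → X → 0 of chain complexes in which each P^i is a projective object of Ch(R). -/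
open CategoryTheory Limits

noncomputable section Everything

section Infra
variable {R : Type} [Ring R]

abbrev Ch (R : Type) [Ring R] := ChainComplex (ModuleCat R) ℤ

abbrev mkComplex (M : ℤ → ModuleCat R) (d : ∀ j : ℤ, M (j+1) ⟶ M j)
    (hd : ∀ j : ℤ, d (j+1) ≫ d j = 0) : Ch R where
  X := M
  d i j := if h : j + 1 = i then eqToHom (congrArg M h.symm) ≫ d j else 0
  shape i j h := dif_neg h
  d_comp_d' i j k hij hjk := by
    obtain rfl : j + 1 = i := hij
    obtain rfl : k + 1 = j := hjk
    simp [hd]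

@[simp] lemma mkComplex_X (M : ℤ → ModuleCat R) (d) (hd) (m : ℤ) :
    (mkComplex M d hd).X m = M m := rfl

@[simp] lemma mkComplex_d (M : ℤ → ModuleCat R) (d) (hd) (j : ℤ) :
    (mkComplex M d hd).d (j+1) j = d j := by
  simp [mkComplex]

def mkHom {K L : Ch R} (f : ∀ m, K.X m ⟶ L.X m)
    (comm : ∀ j : ℤ, f (j+1) ≫ L.d (j+1) j = K.d (j+1) j ≫ f j) : K ⟶ L where
  f := f
  comm' i j hij := by obtain rfl : j + 1 = i := hij; exact comm j

@[simp] lemma mkHom_f {K L : Ch R} (f) (comm) (m : ℤ) :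
    (mkHom (K := K) (L := L) f comm).f m = f m := rfl

lemma d_d_apply (C : Ch R) (i j k : ℤ) (x : C.X i) : C.d j k (C.d i j x) = 0 :=
  calc C.d j k (C.d i j x) = (C.d i j ≫ C.d j k) x := rfl
  _ = (0 : C.X i ⟶ C.X k) x := by rw [C.d_comp_d]
  _ = 0 := rfl

lemma exactAt_iff_exactA (C : Ch R) (m : ℤ) :
    C.ExactAt m ↔ Function.Exact (C.d (m+1) m) (C.d m (m-1)) := by
  rw [C.exactAt_iff' (m+1) m (m-1) (by simp) (by simp),
    ShortComplex.moduleCat_exact_iff]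
  constructor
  · intro h y
    constructor
    · intro hy; exact h y hy
    · rintro ⟨x, rfl⟩
      exact d_d_apply C (m+1) m (m-1) x
  · intro h y hy; exact (h y).1 hy

lemma exactAt_iff_exactB (C : Ch R) (m : ℤ) :
    C.ExactAt (m-1) ↔ Function.Exact (C.d m (m-1)) (C.d (m-1) (m-1-1)) := by
  rw [C.exactAt_iff' m (m-1) (m-1-1) (by simp) (by simp),
    ShortComplex.moduleCat_exact_iff]
  constructor
  · intro h y
    constructor
    · intro hy; exact h y hy
    · rintro ⟨x, rfl⟩
      exact d_d_apply C m (m-1) (m-1-1) x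
  · intro h y hy; exact (h y).1 hy

-- element-level: comm of a chain map
lemma hom_comm_apply {K L : Ch R} (φ : K ⟶ L) (i j : ℤ) (x : K.X i) :
    L.d i j (φ.f i x) = φ.f j (K.d i j x) :=
  calc L.d i j (φ.f i x) = (φ.f i ≫ L.d i j) x := rfl
  _ = (K.d i j ≫ φ.f j) x := by rw [φ.comm i j]
  _ = φ.f j (K.d i j x) := rfl

end Infra

section ModHelpers
universe u
variable {R : Type} [Ring R]

lemma proj_prod {M N : Type*} [AddCommGroup M] [Module R M] [AddCommGroup N] [Module R N]
    (hM : Module.Projective R M) (hN : Module.Projective R N) :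
    Module.Projective R (M × N) := by
  obtain ⟨sM, hsM⟩ := hM.out
  obtain ⟨sN, hsN⟩ := hN.out
  have : Module.Projective R ((M →₀ R) × (N →₀ R)) := Module.Projective.of_free
  exact Module.Projective.of_split
    (LinearMap.prodMap sM sN)
    (LinearMap.prodMap (Finsupp.linearCombination R id) (Finsupp.linearCombination R id))
    (by ext x <;> simp [hsM _, hsN _])

lemma proj_punit : Module.Projective R PUnit.{u+1} := inferInstance

lemma proj_retract {M N : Type*} [AddCommGroup M] [Module R M] [AddCommGroup N] [Module R N]
    (s : M →ₗ[R] N) (r : N →ₗ[R] M) (h : ∀ x, r (s x) = x)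
    (hN : Module.Projective R N) : Module.Projective R M :=
  Module.Projective.of_split s r (by ext x; simp [h x])

end ModHelpers

/-- A resolution `0 → P_n → ⋯ → P_1 → P_0 → X → 0` of length at most `n` of the module `X`,
encoded as an `ℕ`-indexed exact sequence which vanishes in degrees `> n`. -/
structure ResolutionOfLength (R : Type) [Ring R] (n : ℕ) (X : ModuleCat R) where
  P : ℕ → ModuleCat R
  d : ∀ i : ℕ, P (i + 1) ⟶ P i
  ε : P 0 ⟶ X
  surj : Function.Surjective ε
  exact₀ : Function.Exact (d 0) ε
  exact : ∀ i : ℕ, Function.Exact (d (i + 1)) (d i)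
  bounded : ∀ i : ℕ, n < i → Subsingleton (P i)

/-- A module has projective dimension at most `n` if it admits a projective resolution of
length `n`. -/
def HasProjDimLE (R : Type) [Ring R] (n : ℕ) (X : ModuleCat R) : Prop :=
  ∃ res : ResolutionOfLength R n X, ∀ i : ℕ, Module.Projective R (res.P i)

section ResHelpers
universe u
variable {R : Type} [Ring R]

/-- Prepend a module to a family. -/
def consP (A : ModuleCat R) (Q : ℕ → ModuleCat R) : ℕ → ModuleCat R :=
  fun i => Nat.casesOn i A Q

@[simp] lemma consP_zero (A : ModuleCat R) (Q) : consP A Q 0 = A := rfl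
@[simp] lemma consP_succ (A : ModuleCat R) (Q) (i : ℕ) : consP A Q (i+1) = Q i := rfl

/-- Prepend a differential. -/
def consD {A : ModuleCat R} {Q : ℕ → ModuleCat R} (d0 : Q 0 ⟶ A)
    (dQ : ∀ i, Q (i+1) ⟶ Q i) : ∀ i, consP A Q (i+1) ⟶ consP A Q i :=
  fun i => Nat.casesOn i d0 dQ

@[simp] lemma consD_zero {A : ModuleCat R} {Q : ℕ → ModuleCat R} (d0 : Q 0 ⟶ A)
    (dQ : ∀ i, Q (i+1) ⟶ Q i) : consD d0 dQ 0 = d0 := rfl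
@[simp] lemma consD_succ {A : ModuleCat R} {Q : ℕ → ModuleCat R} (d0 : Q 0 ⟶ A)
    (dQ : ∀ i, Q (i+1) ⟶ Q i) (i : ℕ) : consD d0 dQ (i+1) = dQ i := rfl

lemma resOfProjective (n : ℕ) (M : ModuleCat.{u} R) (h : Module.Projective R M) :
    HasProjDimLE R n M := by
  refine ⟨⟨consP M (fun _ => ModuleCat.of R PUnit),
    consD 0 (fun _ => 0), 𝟙 M, fun x => ⟨x, rfl⟩, ?_, ?_, ?_⟩, ?_⟩
  · intro y
    simp only [consD_zero]
    constructor
    · intro hy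
      exact ⟨0, by rw [map_zero]; exact hy.symm⟩
    · rintro ⟨x, rfl⟩
      exact rfl
  · intro i y
    constructor
    · intro _
      exact ⟨0, @Subsingleton.elim PUnit _ _ _⟩
    · intro _
      have hy : y = 0 := @Subsingleton.elim PUnit _ _ _
      rw [hy]
      exact map_zero _
  · rintro (_ | i) hi
    · omega
    · exact inferInstanceAs (Subsingleton PUnit)
  · rintro (_ | i)
    · exact h
    · exact proj_punit

lemma hasProjDimLE_of_equiv {n : ℕ} {M N : ModuleCat.{u} R} (e : M ≃ₗ[R] N) :
    HasProjDimLE R n M → HasProjDimLE R n N := by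
  rintro ⟨res, hres⟩
  refine ⟨⟨res.P, res.d, ModuleCat.ofHom (e.toLinearMap ∘ₗ res.ε.hom), ?_, ?_, res.exact,
    res.bounded⟩, hres⟩
  · exact e.surjective.comp res.surj
  · intro y
    constructor
    · intro hy
      have h0 : res.ε y = 0 := e.injective (show e (res.ε y) = e 0 by
        rw [map_zero]; exact hy)
      exact (res.exact₀ y).1 h0
    · intro hy
      have h0 : res.ε y = 0 := (res.exact₀ y).2 hy
      show e (res.ε y) = 0
      rw [h0, map_zero]

lemma projective_of_pd0 {M : ModuleCat.{u} R} (h : HasProjDimLE R 0 M) :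
    Module.Projective R M := by
  obtain ⟨res, hres⟩ := h
  have hsub : Subsingleton (res.P 1) := res.bounded 1 one_pos
  have hinj : Function.Injective res.ε := by
    rw [injective_iff_map_eq_zero]
    intro a ha
    obtain ⟨x, rfl⟩ := (res.exact₀ a).1 ha
    rw [Subsingleton.elim x 0]
    simp
  haveI := hres 0
  exact Module.Projective.of_equiv
    (LinearEquiv.ofBijective res.ε.hom ⟨hinj, res.surj⟩)

lemma hasProjDimLE_prod {n : ℕ} {M : ModuleCat.{u} R} (V : ModuleCat.{u} R)
    (hV : Module.Projective R V) (h : HasProjDimLE R n M) :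
    HasProjDimLE R n (ModuleCat.of R (M × V)) := by
  obtain ⟨res, hres⟩ := h
  refine ⟨⟨consP (ModuleCat.of R (res.P 0 × V)) (fun k => ModuleCat.of R (res.P (k+1) × PUnit)),
    consD (ModuleCat.ofHom (((res.d 0).hom ∘ₗ LinearMap.fst R _ _).prod 0))
      (fun k => ModuleCat.ofHom ((((res.d (k+1)).hom) ∘ₗ LinearMap.fst R _ _).prod 0)),
    ModuleCat.ofHom (res.ε.hom.prodMap LinearMap.id), ?_, ?_, ?_, ?_⟩, ?_⟩
  · rintro ⟨m, v⟩
    obtain ⟨a, ha⟩ := res.surj m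
    exact ⟨(a, v), Prod.ext ha rfl⟩
  · intro y
    simp only [consD_zero]
    constructor
    · intro hy
      have h1 : res.ε y.1 = 0 := congrArg Prod.fst hy
      have h2 : y.2 = 0 := congrArg Prod.snd hy
      obtain ⟨x, hx⟩ := (res.exact₀ y.1).1 h1
      exact ⟨(x, 0), Prod.ext hx h2.symm⟩
    · rintro ⟨z, rfl⟩
      have h0 : res.ε (res.d 0 z.1) = 0 := (res.exact₀ _).2 ⟨z.1, rfl⟩
      exact Prod.ext h0 rfl
  · rintro (_ | i) y <;>
    · simp only [consD_zero, consD_succ]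
      constructor
      · intro hy
        have h1 : res.d _ y.1 = 0 := congrArg Prod.fst hy
        obtain ⟨x, hx⟩ := ((res.exact _) y.1).1 h1
        exact ⟨(x, 0), Prod.ext hx (@Subsingleton.elim PUnit _ _ _)⟩
      · rintro ⟨z, rfl⟩
        have h0 : res.d _ (res.d _ z.1) = 0 := ((res.exact _) _).2 ⟨z.1, rfl⟩
        exact Prod.ext h0 rfl
  · rintro (_ | i) hi
    · omega
    · haveI := res.bounded (i+1) hi
      exact inferInstanceAs (Subsingleton (res.P (i+1) × PUnit))
  · rintro (_ | i)
    · exact proj_prod (hres 0) hV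
    · exact proj_prod (hres (i+1)) proj_punit

end ResHelpers

section Schanuel
universe u
variable {R : Type} [Ring R]

/-- From a SES `0 → K → P → M → 0` with `P` projective and `pd K ≤ n`, get `pd M ≤ n+1`. -/
lemma pd_step {n : ℕ} {K P M : ModuleCat.{u} R} (i : K ⟶ P) (p : P ⟶ M)
    (hi : Function.Injective i) (hp : Function.Surjective p)
    (hex : Function.Exact i p) (hP : Module.Projective R P)
    (hK : HasProjDimLE R n K) : HasProjDimLE R (n+1) M := by
  obtain ⟨res, hres⟩ := hK
  refine ⟨⟨consP P res.P,
    consD (ModuleCat.ofHom (i.hom ∘ₗ res.ε.hom)) res.d,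
    p, hp, ?_, ?_, ?_⟩, ?_⟩
  · intro y
    simp only [consD_zero]
    constructor
    · intro hy
      obtain ⟨k, hk⟩ := (hex y).1 hy
      obtain ⟨a, ha⟩ := res.surj k
      exact ⟨a, by show i (res.ε a) = y; rw [ha, hk]⟩
    · rintro ⟨a, rfl⟩
      show p (i (res.ε a)) = 0
      exact (hex (i (res.ε a))).2 ⟨res.ε a, rfl⟩
  · rintro (_ | j) y
    · simp only [consD_zero, consD_succ]
      constructor
      · intro hy
        have h0 : res.ε y = 0 := by
          apply hi
          rw [map_zero]
          exact hy
        exact (res.exact₀ y).1 h0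
      · rintro ⟨z, rfl⟩
        show i (res.ε (res.d 0 z)) = 0
        have h0 : res.ε (res.d 0 z) = 0 := (res.exact₀ _).2 ⟨z, rfl⟩
        rw [h0, map_zero]
    · simp only [consD_succ]
      exact res.exact j y
  · rintro (_ | j) hj
    · omega
    · exact res.bounded j (by omega)
  · rintro (_ | j)
    · exact hP
    · exact hres j

/-- Schanuel-style syzygy lemma: given a SES `0 → K → P → M → 0` with `P` projective
and `pd M ≤ n+1`, the syzygy `K` is, up to a projective direct factor, of
projective dimension `≤ n`. -/
lemma schanuel_syzygy {n : ℕ} {K P M : ModuleCat.{u} R} (i : K ⟶ P) (p : P ⟶ M)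
    (hi : Function.Injective i) (hp : Function.Surjective p)
    (hex : Function.Exact i p) (hP : Module.Projective R P)
    (hM : HasProjDimLE R (n+1) M) :
    ∃ W : ModuleCat.{u} R, Module.Projective R W ∧
      HasProjDimLE R n (ModuleCat.of R (K × W)) := by
  obtain ⟨res, hres⟩ := hM
  -- the syzygy of the given resolution
  let K' : ModuleCat R := ModuleCat.of R (LinearMap.ker res.ε.hom)
  have hK' : HasProjDimLE R n K' := by
    refine ⟨⟨fun k => res.P (k+1), fun k => res.d (k+1),
      ModuleCat.ofHom (LinearMap.codRestrict _ (res.d 0).hom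
        (fun x => (res.exact₀ _).2 ⟨x, rfl⟩)), ?_, ?_, fun k => res.exact (k+1), ?_⟩,
      fun k => hres (k+1)⟩
    · rintro ⟨y, hy⟩
      obtain ⟨x, hx⟩ := (res.exact₀ y).1 hy
      exact ⟨x, Subtype.ext hx⟩
    · intro y
      constructor
      · intro hy
        have h0 : res.d 0 y = 0 := congrArg Subtype.val hy
        exact ((res.exact 0) y).1 h0
      · intro hy
        exact Subtype.ext (((res.exact 0) y).2 hy)
    · intro k hk
      exact res.bounded (k+1) (by omega)
  -- the pullback module
  let f : (↥(res.P 0) × ↥P) →ₗ[R] M :=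
    res.ε.hom ∘ₗ LinearMap.fst R _ _ - p.hom ∘ₗ LinearMap.snd R _ _
  let Y : Submodule R (↥(res.P 0) × ↥P) := LinearMap.ker f
  have memY : ∀ (a : ↥(res.P 0)) (b : ↥P), ((a, b) ∈ Y ↔ res.ε a = p b) := by
    intro a b
    show res.ε a - p b = 0 ↔ _
    exact sub_eq_zero
  haveI hPinst := hP
  haveI hP0inst := hres 0
  let q1 : ↥Y →ₗ[R] ↥(res.P 0) := LinearMap.fst R _ _ ∘ₗ Y.subtype
  let q2 : ↥Y →ₗ[R] ↥P := LinearMap.snd R _ _ ∘ₗ Y.subtype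
  let e1 : ↥(LinearMap.ker res.ε.hom) →ₗ[R] ↥Y :=
    LinearMap.codRestrict Y (LinearMap.inl R _ _ ∘ₗ (LinearMap.ker res.ε.hom).subtype)
      (fun k => (memY k.1 0).2 (by rw [k.2, map_zero]))
  let e2 : ↥K →ₗ[R] ↥Y :=
    LinearMap.codRestrict Y (LinearMap.inr R _ _ ∘ₗ i.hom)
      (fun k => (memY 0 (i k)).2 (by
        rw [map_zero]
        exact ((hex (i k)).2 ⟨k, rfl⟩).symm))
  have hq1surj : Function.Surjective q1 := by
    intro a
    obtain ⟨b, hb⟩ := hp (res.ε a)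
    exact ⟨⟨(a, b), (memY a b).2 hb.symm⟩, rfl⟩
  have hq2surj : Function.Surjective q2 := by
    intro b
    obtain ⟨a, ha⟩ := res.surj (p b)
    exact ⟨⟨(a, b), (memY a b).2 ha⟩, rfl⟩
  obtain ⟨s1, hs1⟩ := Module.projective_lifting_property q1 LinearMap.id hq1surj
  obtain ⟨s2, hs2⟩ := Module.projective_lifting_property q2 LinearMap.id hq2surj
  have hs1' : ∀ a, q1 (s1 a) = a := fun a => congrArg (fun h => h a) hs1
  have hs2' : ∀ b, q2 (s2 b) = b := fun b => congrArg (fun h => h b) hs2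
  have hq2e1 : ∀ k, q2 (e1 k) = 0 := fun k => rfl
  have hq1e2 : ∀ k, q1 (e2 k) = 0 := fun k => rfl
  let g1 : (↥(LinearMap.ker res.ε.hom) × ↥P) →ₗ[R] ↥Y :=
    e1 ∘ₗ LinearMap.fst R _ _ + s2 ∘ₗ LinearMap.snd R _ _
  have hg1 : Function.Bijective g1 := by
    constructor
    · rw [injective_iff_map_eq_zero]
      rintro ⟨k, b⟩ hz
      have hb : b = 0 := by
        have := congrArg q2 hz
        simpa [g1, map_add, hq2e1, hs2'] using this
      have hk : e1 k = 0 := by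
        have : g1 (k, b) = e1 k + s2 b := rfl
        rw [this, hb, map_zero, add_zero] at hz
        exact hz
      have hk2 : (k : ↥(res.P 0)) = 0 := by
        have := congrArg (fun y => ((y : ↥Y) : ↥(res.P 0) × ↥P).1) hk
        exact this
      exact Prod.ext (Subtype.ext hk2) hb
    · intro y
      set b := q2 y with hbdef
      have hker : q2 (y - s2 b) = 0 := by
        rw [map_sub, hs2']
        simp [b]
      have hmem : (((y - s2 b : ↥Y) : ↥(res.P 0) × ↥P)).1 ∈ LinearMap.ker res.ε.hom := by
        have hY := (y - s2 b).2
        have h2 : (((y - s2 b : ↥Y) : ↥(res.P 0) × ↥P)).2 = 0 := hker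
        rw [LinearMap.mem_ker]
        have := (memY (((y - s2 b : ↥Y) : ↥(res.P 0) × ↥P)).1
          (((y - s2 b : ↥Y) : ↥(res.P 0) × ↥P)).2).1 (by exact hY)
        rw [h2, map_zero] at this
        exact this
      refine ⟨(⟨_, hmem⟩, b), ?_⟩
      show e1 ⟨_, hmem⟩ + s2 b = y
      have he1 : e1 ⟨_, hmem⟩ = y - s2 b := by
        apply Subtype.ext
        refine Prod.ext rfl ?_
        exact (hker).symm
      rw [he1]
      abel
  let g2 : (↥K × ↥(res.P 0)) →ₗ[R] ↥Y :=
    e2 ∘ₗ LinearMap.fst R _ _ + s1 ∘ₗ LinearMap.snd R _ _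
  have hg2 : Function.Bijective g2 := by
    constructor
    · rw [injective_iff_map_eq_zero]
      rintro ⟨k, a⟩ hz
      have ha : a = 0 := by
        have := congrArg q1 hz
        simpa [g2, map_add, hq1e2, hs1'] using this
      have hk : e2 k = 0 := by
        have : g2 (k, a) = e2 k + s1 a := rfl
        rw [this, ha, map_zero, add_zero] at hz
        exact hz
      have hk2 : i k = 0 := by
        have := congrArg (fun y => ((y : ↥Y) : ↥(res.P 0) × ↥P).2) hk
        exact this
      have : k = 0 := hi (by rw [hk2, map_zero])
      exact Prod.ext this ha
    · intro y
      set a := q1 y with hadef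
      have hker : q1 (y - s1 a) = 0 := by
        rw [map_sub, hs1']
        simp [a]
      have hmem0 : p (((y - s1 a : ↥Y) : ↥(res.P 0) × ↥P)).2 = 0 := by
        have hY := (y - s1 a).2
        have h1 : (((y - s1 a : ↥Y) : ↥(res.P 0) × ↥P)).1 = 0 := hker
        have := (memY (((y - s1 a : ↥Y) : ↥(res.P 0) × ↥P)).1
          (((y - s1 a : ↥Y) : ↥(res.P 0) × ↥P)).2).1 (by exact hY)
        rw [h1, map_zero] at this
        exact this.symm
      obtain ⟨k, hk⟩ := (hex _).1 hmem0
      refine ⟨(k, a), ?_⟩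
      show e2 k + s1 a = y
      have he2 : e2 k = y - s1 a := by
        apply Subtype.ext
        refine Prod.ext ?_ ?_
        · exact (show (0 : ↥(res.P 0)) = _ from (hker).symm)
        · exact hk
      rw [he2]
      abel
  have h1 : HasProjDimLE R n (ModuleCat.of R (↥K' × ↥P)) := hasProjDimLE_prod P hP hK'
  refine ⟨res.P 0, hres 0, ?_⟩
  refine hasProjDimLE_of_equiv ?_ h1
  exact (LinearEquiv.ofBijective g1 hg1).trans (LinearEquiv.ofBijective g2 hg2).symm

end Schanuel

section GConstr
universe u
variable {R : Type} [Ring R]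

/-- canonical free module on (the carrier of) `C.X m` -/
abbrev FrPi (C : Ch R) (m : ℤ) : ((C.X m →₀ R) : Type u) →ₗ[R] C.X m :=
  Finsupp.linearCombination R id

lemma FrPi_surj (C : Ch R) (m : ℤ) : Function.Surjective (FrPi C m) :=
  fun x => ⟨Finsupp.single x 1, by simp⟩

/-- The contractible free complex covering `C`, a direct sum of disks on free modules. -/
abbrev GC (C : Ch R) : Ch R :=
  mkComplex (fun m => ModuleCat.of R ((C.X (m+1) →₀ R) × (C.X m →₀ R)))
    (fun j => ModuleCat.ofHom ((LinearMap.snd R _ _).prod 0))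
    (fun j => ModuleCat.hom_ext (LinearMap.ext fun z => rfl))

lemma GC_d_succ (C : Ch R) (j : ℤ) (x : (GC C).X (j+1)) :
    (GC C).d (j+1) j x = (x.2, 0) := by
  have : (GC C).d (j+1) j = ModuleCat.ofHom ((LinearMap.snd R _ _).prod 0) :=
    mkComplex_d _ _ _ j
  rw [this]
  rfl

lemma GC_d_eq_zero_iff (C : Ch R) {i j : ℤ} (h : j + 1 = i) (x : (GC C).X i) :
    (GC C).d i j x = 0 ↔ x.2 = 0 := by
  subst h
  rw [GC_d_succ]
  constructor
  · intro hx
    exact congrArg Prod.fst hx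
  · intro hx
    rw [hx]
    rfl

lemma GC_mem_range_iff (C : Ch R) {i j : ℤ} (h : j + 1 = i) (y : (GC C).X j) :
    y ∈ Set.range ((GC C).d i j) ↔ y.2 = 0 := by
  subst h
  constructor
  · rintro ⟨x, rfl⟩
    rw [GC_d_succ]
  · intro hy
    refine ⟨(0, y.1), ?_⟩
    rw [GC_d_succ]
    exact Prod.ext rfl hy.symm

/-- The canonical surjection `GC C ⟶ C`. -/
def psiC (C : Ch R) : GC C ⟶ C :=
  mkHom (fun m => ModuleCat.ofHom ((C.d (m+1) m).hom ∘ₗ (FrPi C (m+1)) ∘ₗ LinearMap.fst R _ _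
      + (FrPi C m) ∘ₗ LinearMap.snd R _ _))
    (by
      intro j
      apply ModuleCat.hom_ext
      apply LinearMap.ext
      intro z
      have hG : (GC C).d (j+1) j z = (z.2, 0) := GC_d_succ C j z
      show C.d (j+1) j (C.d (j+1+1) (j+1) (FrPi C (j+1+1) z.1) + FrPi C (j+1) z.2)
        = C.d (j+1) j (FrPi C (j+1) ((GC C).d (j+1) j z).1)
          + FrPi C j ((GC C).d (j+1) j z).2
      rw [hG]
      dsimp only
      rw [map_add, d_d_apply, zero_add, map_zero, add_zero])

lemma psiC_f_apply (C : Ch R) (m : ℤ) (z : (GC C).X m) :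
    (psiC C).f m z = C.d (m+1) m (FrPi C (m+1) z.1) + FrPi C m z.2 := rfl

lemma psiC_surj (C : Ch R) (m : ℤ) : Function.Surjective ((psiC C).f m) := by
  intro x
  obtain ⟨b, hb⟩ := FrPi_surj C m x
  refine ⟨(0, b), ?_⟩
  rw [psiC_f_apply]
  simp [hb]

lemma GC_exact (C : Ch R) (m : ℤ) : (GC C).ExactAt m := by
  rw [exactAt_iff_exactA]
  intro y
  rw [GC_d_eq_zero_iff C (by omega : (m-1) + 1 = m) y,
    GC_mem_range_iff C (rfl : m + 1 = m + 1) y]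

end GConstr

section KcConstr
universe u
variable {R : Type} [Ring R]

/-- The degreewise kernel subcomplex of a chain map. -/
abbrev Kc {A C : Ch R} (φ : A ⟶ C) : Ch R :=
  mkComplex (fun m => ModuleCat.of R ↥(LinearMap.ker (φ.f m).hom))
    (fun j => ModuleCat.ofHom <| LinearMap.codRestrict _
      ((A.d (j+1) j).hom ∘ₗ (LinearMap.ker (φ.f (j+1)).hom).subtype)
      (fun y => by
        rw [LinearMap.mem_ker]
        show φ.f j (A.d (j+1) j y.1) = 0
        rw [← hom_comm_apply φ (j+1) j y.1]
        have : φ.f (j+1) y.1 = 0 := y.2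
        rw [this, map_zero]))
    (fun j => by
      apply ModuleCat.hom_ext
      apply LinearMap.ext
      intro y
      apply Subtype.ext
      show A.d (j+1) j (A.d (j+1+1) (j+1) y.1) = 0
      exact d_d_apply A _ _ _ _)

lemma Kc_d_val {A C : Ch R} (φ : A ⟶ C) (i j : ℤ) (y : (Kc φ).X i) :
    ((Kc φ).d i j y).val = A.d i j y.val := by
  by_cases h : j + 1 = i
  · subst h
    have : (Kc φ).d (j+1) j = _ := mkComplex_d _ _ _ j
    rw [this]
    rfl
  · have h1 : (Kc φ).d i j = 0 := (Kc φ).shape i j (by simpa using h)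
    have h2 : A.d i j = 0 := A.shape i j (by simpa using h)
    rw [h1, h2]
    rfl

/-- The inclusion of the kernel subcomplex. -/
def KcIncl {A C : Ch R} (φ : A ⟶ C) : Kc φ ⟶ A :=
  mkHom (fun m => ModuleCat.ofHom (LinearMap.ker (φ.f m).hom).subtype)
    (by
      intro j
      apply ModuleCat.hom_ext
      apply LinearMap.ext
      intro y
      show A.d (j+1) j y.val = ((Kc φ).d (j+1) j y).val
      rw [Kc_d_val])

lemma KcIncl_f_apply {A C : Ch R} (φ : A ⟶ C) (m : ℤ) (y : (Kc φ).X m) :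
    (KcIncl φ).f m y = y.val := rfl

end KcConstr

section Chases
universe u
variable {R : Type} [Ring R]

/-- Master form: consume exactness of a complex at any syntactically convenient triple. -/
lemma exactAt_iff_exact_d (C : Ch R) {i j k : ℤ} (hij : j + 1 = i) (hjk : k + 1 = j) :
    C.ExactAt j ↔ Function.Exact (C.d i j) (C.d j k) := by
  subst hij
  subst hjk
  rw [C.exactAt_iff' ((k+1)+1) (k+1) k (by simp) (by rw [ChainComplex.next]; omega),
    ShortComplex.moduleCat_exact_iff]
  constructor
  · intro h y
    constructor
    · intro hy; exact h y hy
    · rintro ⟨x, rfl⟩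
      exact d_d_apply C _ _ _ x
  · intro h y hy; exact (h y).1 hy

lemma eo_exact_d {C : Ch R} (h : ∀ m, C.ExactAt m) {i j k : ℤ} (hij : j + 1 = i)
    (hjk : k + 1 = j) : Function.Exact (C.d i j) (C.d j k) :=
  (exactAt_iff_exact_d C hij hjk).1 (h j)

/-- Exactness of the kernel complex. -/
lemma kc_exact {A Cc : Ch R} (φ : A ⟶ Cc) (hsurj : ∀ m, Function.Surjective (φ.f m))
    (hA : ∀ m, A.ExactAt m) (hC : ∀ m, Cc.ExactAt m) (m : ℤ) : (Kc φ).ExactAt m := by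
  rw [exactAt_iff_exact_d (Kc φ) (rfl : m + 1 = m + 1) (by omega : (m-1) + 1 = m)]
  intro y
  constructor
  · intro hy
    have hyv : A.d m (m-1) y.val = 0 := by
      rw [← Kc_d_val φ m (m-1) y, hy]
      rfl
    obtain ⟨a, ha⟩ := (eo_exact_d hA (rfl : m + 1 = m + 1) (by omega : (m-1)+1 = m) y.val).1 hyv
    have hx' : Cc.d (m+1) m (φ.f (m+1) a) = 0 := by
      rw [hom_comm_apply, ha]
      exact y.2
    obtain ⟨y', hy'⟩ := (eo_exact_d hC (rfl : (m+1) + 1 = m+1+1) (rfl : m + 1 = m + 1) _).1 hx'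
    obtain ⟨a'', ha''⟩ := hsurj (m+1+1) y'
    have hmem : φ.f (m+1) (a - A.d (m+1+1) (m+1) a'') = 0 := by
      rw [map_sub, ← hom_comm_apply, ha'', hy']
      exact sub_self _
    refine ⟨⟨a - A.d (m+1+1) (m+1) a'', hmem⟩, ?_⟩
    apply Subtype.ext
    rw [Kc_d_val]
    show A.d (m+1) m (a - A.d (m+1+1) (m+1) a'') = y.val
    rw [map_sub, ha, d_d_apply, sub_zero]
  · rintro ⟨x, rfl⟩
    apply Subtype.ext
    rw [Kc_d_val, Kc_d_val]
    exact d_d_apply A _ _ _ _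

/-- Exactness of the base from exactness of the cover and the kernel. -/
lemma eo_of_ses {A Xc : Ch R} (φ : A ⟶ Xc) (hsurj : ∀ m, Function.Surjective (φ.f m))
    (hA : ∀ m, A.ExactAt m) (hK : ∀ m, (Kc φ).ExactAt m) (m : ℤ) : Xc.ExactAt m := by
  rw [exactAt_iff_exact_d Xc (rfl : m + 1 = m + 1) (by omega : (m-1) + 1 = m)]
  intro x
  constructor
  · intro hx
    obtain ⟨a, rfl⟩ := hsurj m x
    have h1 : φ.f (m-1) (A.d m (m-1) a) = 0 := by
      rw [← hom_comm_apply, hx]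
    have hcyc : (Kc φ).d (m-1) (m-1-1) ⟨A.d m (m-1) a, h1⟩ = 0 := by
      apply Subtype.ext
      rw [Kc_d_val]
      exact d_d_apply A _ _ _ _
    obtain ⟨k', hk'⟩ := (eo_exact_d hK (by omega : (m-1) + 1 = m)
      (by omega : (m-1-1) + 1 = m - 1) _).1 hcyc
    have hk'v : A.d m (m-1) k'.val = A.d m (m-1) a := by
      rw [← Kc_d_val φ m (m-1) k', hk']
    have h2 : A.d m (m-1) (a - k'.val) = 0 := by
      rw [map_sub, hk'v, sub_self]
    obtain ⟨a'', ha''⟩ := (eo_exact_d hA (rfl : m + 1 = m + 1)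
      (by omega : (m-1) + 1 = m) _).1 h2
    refine ⟨φ.f (m+1) a'', ?_⟩
    rw [hom_comm_apply, ha'', map_sub]
    have : φ.f m k'.val = 0 := k'.2
    rw [this, sub_zero]
  · rintro ⟨y, rfl⟩
    exact d_d_apply Xc _ _ _ y

end Chases

section ZSes
universe u
variable {R : Type} [Ring R]

/-- Cycles functorially: the inclusion of cycles of the kernel complex into cycles. -/
def zIota {A Cc : Ch R} (φ : A ⟶ Cc) (m : ℤ) :
    ↥(LinearMap.ker ((Kc φ).d m (m-1)).hom) →ₗ[R] ↥(LinearMap.ker (A.d m (m-1)).hom) :=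
  LinearMap.codRestrict _
    ((LinearMap.ker (φ.f m).hom).subtype ∘ₗ (LinearMap.ker ((Kc φ).d m (m-1)).hom).subtype)
    (fun k => by
      rw [LinearMap.mem_ker]
      show A.d m (m-1) k.val.val = 0
      rw [← Kc_d_val φ m (m-1) k.val]
      have : (Kc φ).d m (m-1) k.val = 0 := k.2
      rw [this]
      rfl)

/-- Cycles functorially: the map induced by `φ` on cycles. -/
def zPi {A Cc : Ch R} (φ : A ⟶ Cc) (m : ℤ) :
    ↥(LinearMap.ker (A.d m (m-1)).hom) →ₗ[R] ↥(LinearMap.ker (Cc.d m (m-1)).hom) :=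
  LinearMap.codRestrict _
    ((φ.f m).hom ∘ₗ (LinearMap.ker (A.d m (m-1)).hom).subtype)
    (fun a => by
      rw [LinearMap.mem_ker]
      show Cc.d m (m-1) (φ.f m a.val) = 0
      rw [hom_comm_apply]
      have : A.d m (m-1) a.val = 0 := a.2
      rw [this, map_zero])

lemma zIota_inj {A Cc : Ch R} (φ : A ⟶ Cc) (m : ℤ) : Function.Injective (zIota φ m) := by
  intro a b hab
  have h2 : (zIota φ m a).val = (zIota φ m b).val := by rw [hab]
  exact Subtype.ext (Subtype.ext h2)

lemma zPi_surj {A Cc : Ch R} (φ : A ⟶ Cc) (hsurj : ∀ m, Function.Surjective (φ.f m))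
    (hK : ∀ m, (Kc φ).ExactAt m) (m : ℤ) : Function.Surjective (zPi φ m) := by
  rintro ⟨x, hx⟩
  rw [LinearMap.mem_ker] at hx
  obtain ⟨a, ha⟩ := hsurj m x
  have h1 : φ.f (m-1) (A.d m (m-1) a) = 0 := by
    rw [← hom_comm_apply, ha, hx]
  have hcyc : (Kc φ).d (m-1) (m-1-1) ⟨A.d m (m-1) a, h1⟩ = 0 := by
    apply Subtype.ext
    rw [Kc_d_val]
    exact d_d_apply A _ _ _ _
  obtain ⟨k', hk'⟩ := (eo_exact_d hK (by omega : (m-1) + 1 = m)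
    (by omega : (m-1-1) + 1 = m - 1) _).1 hcyc
  have hk'v : A.d m (m-1) k'.val = A.d m (m-1) a := by
    rw [← Kc_d_val φ m (m-1) k', hk']
  have hmem : A.d m (m-1) (a - k'.val) = 0 := by
    rw [map_sub, hk'v, sub_self]
  refine ⟨⟨a - k'.val, hmem⟩, ?_⟩
  apply Subtype.ext
  show φ.f m (a - k'.val) = x
  rw [map_sub, ha]
  have : φ.f m k'.val = 0 := k'.2
  rw [this, sub_zero]

lemma z_exact {A Cc : Ch R} (φ : A ⟶ Cc) (m : ℤ) :
    Function.Exact (zIota φ m) (zPi φ m) := by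
  intro y
  constructor
  · intro hy
    have hyv : φ.f m y.val = 0 := congrArg Subtype.val hy
    have hcyc : (Kc φ).d m (m-1) ⟨y.val, hyv⟩ = 0 := by
      apply Subtype.ext
      rw [Kc_d_val]
      exact y.2
    exact ⟨⟨⟨y.val, hyv⟩, hcyc⟩, Subtype.ext rfl⟩
  · rintro ⟨k, rfl⟩
    apply Subtype.ext
    show φ.f m k.val.val = 0
    exact k.val.2

end ZSes

section ProjComplex
universe u
variable {R : Type} [Ring R]

instance psiC_epi (C : Ch R) : Epi (psiC C) :=
  HomologicalComplex.epi_of_epi_f _ fun m =>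
    (ModuleCat.epi_iff_surjective _).2 (psiC_surj C m)

lemma projC_facts (C : Ch R) (hC : Projective C) :
    (∀ m, C.ExactAt m) ∧
      (∀ m, Module.Projective R ↥(LinearMap.ker (C.d m (m-1)).hom)) := by
  haveI := hC
  let σ : C ⟶ GC C := Projective.factorThru (𝟙 C) (psiC C)
  have hσ : σ ≫ psiC C = 𝟙 C := Projective.factorThru_comp _ _
  have hσ' : ∀ (m : ℤ) (x : C.X m), (psiC C).f m (σ.f m x) = x := by
    intro m x
    calc (psiC C).f m (σ.f m x) = ((σ ≫ psiC C).f m) x := rfl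
    _ = ((𝟙 C : C ⟶ C).f m) x := by rw [hσ]
    _ = x := rfl
  have hkey : ∀ (m : ℤ) (x : C.X m), C.d m (m-1) x = 0 → (σ.f m x).2 = 0 := by
    intro m x hx
    have h1 : (GC C).d m (m-1) (σ.f m x) = σ.f (m-1) (C.d m (m-1) x) :=
      hom_comm_apply σ m (m-1) x
    rw [hx, map_zero] at h1
    exact (GC_d_eq_zero_iff C (by omega : (m-1)+1 = m) _).1 h1
  have hval : ∀ (m : ℤ) (x : C.X m), C.d m (m-1) x = 0 →
      C.d (m+1) m (FrPi C (m+1) (σ.f m x).1) = x := by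
    intro m x hx
    have h := hσ' m x
    rw [psiC_f_apply, hkey m x hx, map_zero, add_zero] at h
    exact h
  constructor
  · intro m
    rw [exactAt_iff_exact_d C (rfl : m + 1 = m + 1) (by omega : (m-1)+1 = m)]
    intro x
    constructor
    · intro hx
      exact ⟨FrPi C (m+1) (σ.f m x).1, hval m x hx⟩
    · rintro ⟨y, rfl⟩
      exact d_d_apply C _ _ _ y
  · intro m
    refine proj_retract
      (s := (LinearMap.fst R _ _ ∘ₗ (σ.f m).hom ∘ₗ
        (LinearMap.ker (C.d m (m-1)).hom).subtype))
      (r := LinearMap.codRestrict _ ((C.d (m+1) m).hom ∘ₗ FrPi C (m+1))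
        (fun y => by rw [LinearMap.mem_ker]; exact d_d_apply C _ _ _ _))
      ?_ inferInstance
    intro z
    apply Subtype.ext
    show C.d (m+1) m (FrPi C (m+1) (σ.f m z.val).1) = z.val
    exact hval m z.val z.2

end ProjComplex

/-- An exact sequence of chain complexes `0 → P^n → ⋯ → P^1 → P^0 → X → 0`, encoded as an
`ℕ`-indexed degreewise exact sequence which vanishes in degrees `> n`. -/
structure ComplexSequenceTo (R : Type) [Ring R] (n : ℕ)
    (X : ChainComplex (ModuleCat R) ℤ) where
  A : ℕ → ChainComplex (ModuleCat R) ℤ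
  d : ∀ i : ℕ, A (i + 1) ⟶ A i
  ε : A 0 ⟶ X
  surj : ∀ m : ℤ, Function.Surjective ((ε).f m)
  exact₀ : ∀ m : ℤ, Function.Exact ((d 0).f m) ((ε).f m)
  exact : ∀ (i : ℕ) (m : ℤ), Function.Exact ((d (i + 1)).f m) ((d i).f m)
  bounded : ∀ i : ℕ, n < i → ∀ m : ℤ, Subsingleton ((A i).X m)

section ConverseMain
universe u
variable {R : Type} [Ring R]

lemma converse_main (n : ℕ) : ∀ (X : ChainComplex (ModuleCat.{u} R) ℤ)
    (S : ComplexSequenceTo R n X),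
    (∀ i m, (S.A i).ExactAt m) →
    (∀ i m, Module.Projective R ↥(LinearMap.ker ((S.A i).d m (m-1)).hom)) →
    (∀ m, X.ExactAt m) ∧
      (∀ m, HasProjDimLE R n (ModuleCat.of R ↥(LinearMap.ker (X.d m (m-1)).hom))) := by
  induction n with
  | zero =>
    intro X S hA hZ
    have hinj : ∀ m, Function.Injective (S.ε.f m) := by
      intro m
      rw [injective_iff_map_eq_zero]
      intro y hy
      obtain ⟨z, rfl⟩ := (S.exact₀ m y).1 hy
      haveI := S.bounded 1 (by omega) m
      rw [Subsingleton.elim z 0, map_zero]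
    -- exactness of X
    have heoX : ∀ m, X.ExactAt m := by
      intro m
      rw [exactAt_iff_exact_d X (rfl : m + 1 = m + 1) (by omega : (m-1)+1 = m)]
      intro x
      constructor
      · intro hx
        obtain ⟨a, ha⟩ := S.surj m x
        have h1 : (S.A 0).d m (m-1) a = 0 := by
          apply hinj (m-1)
          rw [map_zero, ← hom_comm_apply, ha, hx]
        obtain ⟨a', ha'⟩ := (eo_exact_d (hA 0) (rfl : m + 1 = m + 1)
          (by omega : (m-1)+1 = m) a).1 h1
        exact ⟨S.ε.f (m+1) a', by rw [hom_comm_apply, ha', ha]⟩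
      · rintro ⟨y, rfl⟩
        exact d_d_apply X _ _ _ y
    refine ⟨heoX, ?_⟩
    intro m
    have hbij : Function.Bijective (zPi S.ε m) := by
      constructor
      · intro a b hab
        have h2 : (zPi S.ε m a).val = (zPi S.ε m b).val := by rw [hab]
        exact Subtype.ext (hinj m h2)
      · rintro ⟨x, hx⟩
        rw [LinearMap.mem_ker] at hx
        obtain ⟨a, ha⟩ := S.surj m x
        have h1 : (S.A 0).d m (m-1) a = 0 := by
          apply hinj (m-1)
          rw [map_zero, ← hom_comm_apply, ha, hx]
        exact ⟨⟨a, h1⟩, Subtype.ext ha⟩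
    haveI := hZ 0 m
    exact resOfProjective 0 _
      (Module.Projective.of_equiv (LinearEquiv.ofBijective (zPi S.ε m) hbij))
  | succ n ih =>
    intro X S hA hZ
    -- the kernel complex
    let K : ChainComplex (ModuleCat R) ℤ := Kc S.ε
    let ε' : S.A 1 ⟶ K :=
      mkHom (fun m => ModuleCat.ofHom <| LinearMap.codRestrict _ ((S.d 0).f m).hom
        (fun y => by
          rw [LinearMap.mem_ker]
          exact (S.exact₀ m _).2 ⟨y, rfl⟩))
        (by
          intro j
          apply ModuleCat.hom_ext
          apply LinearMap.ext
          intro y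
          apply Subtype.ext
          exact (Kc_d_val S.ε (j+1) j _).trans (hom_comm_apply (S.d 0) (j+1) j y))
    let S' : ComplexSequenceTo R n K := {
      A := fun i => S.A (i+1)
      d := fun i => S.d (i+1)
      ε := ε'
      surj := by
        rintro m ⟨y, hy⟩
        rw [LinearMap.mem_ker] at hy
        obtain ⟨z, hz⟩ := (S.exact₀ m y).1 hy
        exact ⟨z, Subtype.ext hz⟩
      exact₀ := by
        intro m y
        constructor
        · intro hy
          have h0 : (S.d 0).f m y = 0 := congrArg Subtype.val hy
          exact (S.exact 0 m y).1 h0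
        · intro hy
          exact Subtype.ext ((S.exact 0 m y).2 hy)
      exact := fun i m => S.exact (i+1) m
      bounded := fun i hi m => S.bounded (i+1) (by omega) m }
    obtain ⟨hKeo, hKpd⟩ := ih K S' (fun i m => hA (i+1) m) (fun i m => hZ (i+1) m)
    have heoX : ∀ m, X.ExactAt m := eo_of_ses S.ε S.surj (hA 0) hKeo
    refine ⟨heoX, ?_⟩
    intro m
    exact pd_step (K := ModuleCat.of R ↥(LinearMap.ker (K.d m (m-1)).hom))
      (P := ModuleCat.of R ↥(LinearMap.ker ((S.A 0).d m (m-1)).hom))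
      (ModuleCat.ofHom (zIota S.ε m)) (ModuleCat.ofHom (zPi S.ε m)) (zIota_inj S.ε m)
      (zPi_surj S.ε S.surj hKeo m) (z_exact S.ε m) (hZ 0 m) (hKpd m)

end ConverseMain

section GCProj
universe u
variable {R : Type} [Ring R]

lemma GC_projective (C : Ch R) : Projective (GC C) := by
  constructor
  intro E Xt f e he
  have hesurj : ∀ m, Function.Surjective (e.f m) := by
    intro m
    haveI : Epi (e.f m) := inferInstance
    exact (ModuleCat.epi_iff_surjective _).1 this
  have hlift : ∀ k : ℤ, ∃ g : (↥(C.X k) →₀ R) →ₗ[R] E.X k,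
      (e.f k).hom ∘ₗ g = (f.f k).hom ∘ₗ LinearMap.inr R _ _ := by
    intro k
    exact Module.projective_lifting_property _ _ (hesurj k)
  choose g hg using hlift
  have hg' : ∀ (k : ℤ) (b : (C.X k →₀ R)), e.f k (g k b) = f.f k (0, b) := by
    intro k b
    exact congrArg (fun h => h b) (hg k)
  refine ⟨mkHom (fun m => ModuleCat.ofHom ((E.d (m+1) m).hom ∘ₗ g (m+1) ∘ₗ LinearMap.fst R _ _
      + g m ∘ₗ LinearMap.snd R _ _)) ?_, ?_⟩
  · intro j
    apply ModuleCat.hom_ext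
    apply LinearMap.ext
    intro z
    have hGd : (GC C).d (j+1) j z = (z.2, 0) := GC_d_succ C j z
    show E.d (j+1) j (E.d (j+1+1) (j+1) (g (j+1+1) z.1) + g (j+1) z.2)
      = E.d (j+1) j (g (j+1) ((GC C).d (j+1) j z).1) + g j ((GC C).d (j+1) j z).2
    rw [hGd]
    dsimp only
    rw [map_add, d_d_apply, zero_add, map_zero, add_zero]
  · apply HomologicalComplex.hom_f_injective
    funext m
    apply ModuleCat.hom_ext
    apply LinearMap.ext
    intro z
    show e.f m (E.d (m+1) m (g (m+1) z.1) + g m z.2) = f.f m z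
    rw [map_add, ← hom_comm_apply e (m+1) m, hg' (m+1) z.1, hg' m z.2,
      hom_comm_apply f (m+1) m, GC_d_succ]
    dsimp only
    have h2 : ((z.1, 0) : (GC C).X m) + ((0, z.2) : (GC C).X m) = z := by
      rw [Prod.mk_add_mk, add_zero, zero_add]
    rw [← map_add, h2]

end GCProj

section Sufficiency
universe u
variable {R : Type} [Ring R]

def xcast {C : Ch R} {a b : ℤ} (h : a = b) : C.X a →ₗ[R] C.X b := by
  subst h; exact LinearMap.id

lemma xcast_of_d {C : Ch R} {a b : ℤ} (h : a = b) (c : ℤ) (x : C.X c) :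
    xcast (C := C) h (C.d c a x) = C.d c b x := by subst h; rfl

lemma xcast_cancel {C : Ch R} {a b : ℤ} (h : a = b) (x : C.X a) :
    xcast (C := C) h.symm (xcast (C := C) h x) = x := by subst h; rfl

def zcast {C : Ch R} {a b : ℤ} (h : a = b) :
    ↥(LinearMap.ker (C.d a (a-1)).hom) →ₗ[R] ↥(LinearMap.ker (C.d b (b-1)).hom) := by
  subst h; exact LinearMap.id

lemma zcast_val {C : Ch R} {a b : ℤ} (h : a = b) (z : ↥(LinearMap.ker (C.d a (a-1)).hom)) :
    (zcast (C := C) h z).val = xcast (C := C) h z.val := by subst h; rfl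

lemma GC_zker_proj (C : Ch R) (m : ℤ) :
    Module.Projective R ↥(LinearMap.ker ((GC C).d m (m-1)).hom) := by
  refine proj_retract
    (s := LinearMap.fst R _ _ ∘ₗ (LinearMap.ker ((GC C).d m (m-1)).hom).subtype)
    (r := LinearMap.codRestrict _ (LinearMap.inl R _ _)
      (fun a => by
        rw [LinearMap.mem_ker, GC_d_eq_zero_iff C (by omega : (m-1)+1 = m)]
        rfl))
    ?_ inferInstance
  intro z
  apply Subtype.ext
  have h2 : z.val.2 = 0 := by
    have := z.2
    rw [LinearMap.mem_ker, GC_d_eq_zero_iff C (by omega : (m-1)+1 = m)] at this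
    exact this
  exact Prod.ext rfl h2.symm

/-- An exact complex with projective cycle modules is a projective object. -/
lemma projective_of_exact_zproj (C : Ch R) (heo : ∀ m, C.ExactAt m)
    (hZ : ∀ m, Module.Projective R ↥(LinearMap.ker (C.d m (m-1)).hom)) :
    Projective C := by
  -- boundary map to cycles one degree down
  let dbar : ∀ m : ℤ, (C.X m →ₗ[R] ↥(LinearMap.ker (C.d (m-1) (m-1-1)).hom)) := fun m =>
    LinearMap.codRestrict _ (C.d m (m-1)).hom
      (fun x => by rw [LinearMap.mem_ker]; exact d_d_apply C _ _ _ _)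
  have hdbar_surj : ∀ m, Function.Surjective (dbar m) := by
    intro m z
    obtain ⟨y, hy⟩ := (eo_exact_d heo (by omega : (m-1) + 1 = m)
      (by omega : (m-1-1) + 1 = m - 1) z.val).1 z.2
    exact ⟨y, Subtype.ext hy⟩
  -- a linear section of dbar
  have htB : ∀ m : ℤ, ∃ t : ↥(LinearMap.ker (C.d (m-1) (m-1-1)).hom) →ₗ[R] C.X m,
      ∀ z, dbar m (t z) = z := by
    intro m
    haveI := hZ (m-1)
    obtain ⟨t, ht⟩ := Module.projective_lifting_property (dbar m) LinearMap.id
      (hdbar_surj m)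
    exact ⟨t, fun z => congrArg (fun h => h z) ht⟩
  choose tB htB using htB
  -- projection to the cycle part
  let rho : ∀ m : ℤ, (C.X m →ₗ[R] ↥(LinearMap.ker (C.d m (m-1)).hom)) := fun m =>
    LinearMap.codRestrict _ (LinearMap.id - tB m ∘ₗ dbar m)
      (fun x => by
        rw [LinearMap.mem_ker]
        show C.d m (m-1) (x - tB m (dbar m x)) = 0
        rw [map_sub]
        have : C.d m (m-1) (tB m (dbar m x)) = (dbar m (tB m (dbar m x))).val := rfl
        rw [this, htB m (dbar m x)]
        show C.d m (m-1) x - C.d m (m-1) x = 0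
        exact sub_self _)
  have rho_val : ∀ (m : ℤ) (x : C.X m), (rho m x).val = x - tB m (dbar m x) := fun m x => rfl
  constructor
  intro E Xt f e he
  have hesurj : ∀ m, Function.Surjective (e.f m) := by
    intro m
    haveI : Epi (e.f m) := inferInstance
    exact (ModuleCat.epi_iff_surjective _).1 this
  have hwB : ∀ m : ℤ, ∃ w : ↥(LinearMap.ker (C.d (m-1) (m-1-1)).hom) →ₗ[R] E.X m,
      ∀ z, e.f m (w z) = f.f m (tB m z) := by
    intro m
    haveI := hZ (m-1)
    obtain ⟨w, hw⟩ := Module.projective_lifting_property (e.f m).hom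
      ((f.f m).hom ∘ₗ tB m) (hesurj m)
    exact ⟨w, fun z => congrArg (fun h => h z) hw⟩
  choose wB hwB using hwB
  refine ⟨mkHom (fun m => ModuleCat.ofHom
      ((E.d (m+1) m).hom ∘ₗ wB (m+1) ∘ₗ zcast (by omega : m = (m+1)-1) ∘ₗ rho m
        + wB m ∘ₗ dbar m)) ?_, ?_⟩
  · intro j
    apply ModuleCat.hom_ext
    apply LinearMap.ext
    intro x
    show E.d (j+1) j (E.d (j+1+1) (j+1) _ + wB (j+1) (dbar (j+1) x))
      = E.d (j+1) j (wB (j+1) (zcast (by omega) (rho j (C.d (j+1) j x))))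
        + wB j (dbar j (C.d (j+1) j x))
    rw [map_add, d_d_apply, zero_add]
    have h1 : dbar j (C.d (j+1) j x) = 0 := by
      apply Subtype.ext
      exact d_d_apply C _ _ _ x
    rw [h1, map_zero, add_zero]
    congr 1
    apply congrArg
    apply Subtype.ext
    rw [zcast_val, rho_val, h1, map_zero, sub_zero]
    exact (xcast_of_d (by omega : j = (j+1)-1) (j+1) x).symm
  · apply HomologicalComplex.hom_f_injective
    funext m
    apply ModuleCat.hom_ext
    apply LinearMap.ext
    intro x
    show e.f m (E.d (m+1) m (wB (m+1) (zcast (by omega : m = (m+1)-1) (rho m x)))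
      + wB m (dbar m x)) = f.f m x
    rw [map_add, ← hom_comm_apply e (m+1) m, hwB (m+1), hwB m,
      hom_comm_apply f (m+1) m]
    have hkey : C.d (m+1) m (tB (m+1) (zcast (by omega : m = (m+1)-1) (rho m x)))
        = (rho m x).val := by
      have h1 : C.d (m+1) ((m+1)-1) (tB (m+1) (zcast (by omega : m = (m+1)-1) (rho m x)))
          = (zcast (C := C) (by omega : m = (m+1)-1) (rho m x)).val := by
        have := htB (m+1) (zcast (by omega : m = (m+1)-1) (rho m x))
        exact congrArg Subtype.val this
      have h2 := xcast_of_d (C := C) (by omega : (m+1)-1 = m) (m+1)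
        (tB (m+1) (zcast (by omega : m = (m+1)-1) (rho m x)))
      rw [← h2, h1, zcast_val]
      exact xcast_cancel (C := C) _ _
    rw [hkey, rho_val, map_sub, sub_add_cancel]

end Sufficiency

section ForwardMain
universe u
variable {R : Type} [Ring R]

def consCh (A : Ch R) (Q : ℕ → Ch R) : ℕ → Ch R := fun i => Nat.casesOn i A Q

@[simp] lemma consCh_zero (A : Ch R) (Q) : consCh A Q 0 = A := rfl
@[simp] lemma consCh_succ (A : Ch R) (Q) (i : ℕ) : consCh A Q (i+1) = Q i := rfl

def consDCh {A : Ch R} {Q : ℕ → Ch R} (d0 : Q 0 ⟶ A) (dQ : ∀ i, Q (i+1) ⟶ Q i) :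
    ∀ i, consCh A Q (i+1) ⟶ consCh A Q i := fun i => Nat.casesOn i d0 dQ

@[simp] lemma consDCh_zero {A : Ch R} {Q : ℕ → Ch R} (d0 : Q 0 ⟶ A)
    (dQ : ∀ i, Q (i+1) ⟶ Q i) : consDCh d0 dQ 0 = d0 := rfl
@[simp] lemma consDCh_succ {A : Ch R} {Q : ℕ → Ch R} (d0 : Q 0 ⟶ A)
    (dQ : ∀ i, Q (i+1) ⟶ Q i) (i : ℕ) : consDCh d0 dQ (i+1) = dQ i := rfl

/-- The zero complex (with `PUnit` components). -/
def zCh : Ch R := mkComplex (fun _ => ModuleCat.of R PUnit) (fun _ => 0)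
  (fun _ => by simp)

lemma zCh_sub (m : ℤ) : Subsingleton ((zCh (R := R)).X m) :=
  inferInstanceAs (Subsingleton PUnit)

lemma zCh_projective : Projective (zCh (R := R)) := by
  constructor
  intro E Xt f e he
  refine ⟨0, ?_⟩
  apply HomologicalComplex.hom_f_injective
  funext m
  apply ModuleCat.hom_ext
  apply LinearMap.ext
  intro y
  haveI := zCh_sub (R := R) m
  rw [Subsingleton.elim y 0, map_zero, map_zero]

lemma forward_main (n : ℕ) : ∀ (X : ChainComplex (ModuleCat.{u} R) ℤ),
    (∀ m, X.ExactAt m) →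
    (∀ m : ℤ, ∃ W : ModuleCat.{u} R, Module.Projective R W ∧
      HasProjDimLE R n (ModuleCat.of R (↥(LinearMap.ker (X.d m (m-1)).hom) × ↥W))) →
    ∃ S : ComplexSequenceTo R n X, ∀ i, Projective (S.A i) := by
  induction n with
  | zero =>
    intro X heo hpd
    have hZp : ∀ m, Module.Projective R ↥(LinearMap.ker (X.d m (m-1)).hom) := by
      intro m
      obtain ⟨W, hW, hpd0⟩ := hpd m
      have hprod : Module.Projective R (↥(LinearMap.ker (X.d m (m-1)).hom) × ↥W) :=
        projective_of_pd0 hpd0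
      exact proj_retract (s := LinearMap.inl R _ _) (r := LinearMap.fst R _ _)
        (fun x => rfl) hprod
    have hXproj : Projective X := projective_of_exact_zproj X heo hZp
    refine ⟨⟨consCh X (fun _ => zCh), consDCh (0 : zCh ⟶ X) (fun _ => 0), 𝟙 X,
      fun m x => ⟨x, rfl⟩, ?_, ?_, ?_⟩, ?_⟩
    · intro m y
      simp only [consDCh_zero]
      constructor
      · intro hy
        refine ⟨0, ?_⟩
        rw [map_zero]
        exact hy.symm
      · rintro ⟨z, rfl⟩
        haveI : Subsingleton (↥((consCh X (fun _ => zCh) (0+1)).X m)) := zCh_sub (R := R) m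
        rw [Subsingleton.elim z 0, map_zero, map_zero]
    · intro i m y
      haveI : Subsingleton (↥((consCh X (fun _ => zCh) (i+1)).X m)) :=
        zCh_sub (R := R) m
      have hy : y = 0 := Subsingleton.elim y 0
      constructor
      · intro _
        exact ⟨0, by rw [map_zero, hy]⟩
      · intro _
        rw [hy, map_zero]
    · intro i hi m
      rcases i with _ | i
      · omega
      · exact zCh_sub (R := R) m
    · rintro (_ | i)
      · exact hXproj
      · exact zCh_projective
  | succ n ih =>
    intro X heo hpd
    set K := Kc (psiC X) with hKdef
    have hKeo : ∀ m, K.ExactAt m := kc_exact (psiC X) (psiC_surj X) (GC_exact X) heo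
    have hKZ : ∀ m : ℤ, ∃ W : ModuleCat.{u} R, Module.Projective R W ∧
        HasProjDimLE R n (ModuleCat.of R (↥(LinearMap.ker (K.d m (m-1)).hom) × ↥W)) := by
      intro m
      obtain ⟨W, hW, hpdm⟩ := hpd m
      have := schanuel_syzygy
        (K := ModuleCat.of R ↥(LinearMap.ker (K.d m (m-1)).hom))
        (P := ModuleCat.of R (↥(LinearMap.ker ((GC X).d m (m-1)).hom) × ↥W))
        (M := ModuleCat.of R (↥(LinearMap.ker (X.d m (m-1)).hom) × ↥W))
        (ModuleCat.ofHom ((zIota (psiC X) m).prod 0))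
        (ModuleCat.ofHom ((zPi (psiC X) m).prodMap LinearMap.id))
        (by
          intro a b hab
          exact zIota_inj (psiC X) m (congrArg Prod.fst hab))
        (by
          rintro ⟨x, w⟩
          obtain ⟨a, ha⟩ := zPi_surj (psiC X) (psiC_surj X) hKeo m x
          exact ⟨(a, w), Prod.ext ha rfl⟩)
        (by
          intro y
          constructor
          · intro hy
            have h1 : zPi (psiC X) m y.1 = 0 := congrArg Prod.fst hy
            have h2 : y.2 = 0 := congrArg Prod.snd hy
            obtain ⟨k, hk⟩ := (z_exact (psiC X) m y.1).1 h1
            exact ⟨k, Prod.ext hk h2.symm⟩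
          · rintro ⟨k, rfl⟩
            have h1 : zPi (psiC X) m (zIota (psiC X) m k) = 0 :=
              (z_exact (psiC X) m _).2 ⟨k, rfl⟩
            exact Prod.ext h1 rfl)
        (proj_prod (GC_zker_proj X m) hW)
        hpdm
      obtain ⟨W', hW', hres⟩ := this
      exact ⟨W', hW', hres⟩
    obtain ⟨S', hS'proj⟩ := ih K hKeo hKZ
    refine ⟨⟨consCh (GC X) S'.A, consDCh (S'.ε ≫ KcIncl (psiC X)) S'.d, psiC X,
      psiC_surj X, ?_, ?_, ?_⟩, ?_⟩
    · intro m y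
      simp only [consDCh_zero]
      constructor
      · intro hy
        obtain ⟨z, hz⟩ := S'.surj m (⟨y, hy⟩ : ↥(LinearMap.ker ((psiC X).f m).hom))
        exact ⟨z, congrArg Subtype.val hz⟩
      · rintro ⟨z, rfl⟩
        exact (S'.ε.f m z).2
    · rintro (_ | i) m y
      · simp only [consDCh_zero, consDCh_succ]
        constructor
        · intro hy
          have h0 : S'.ε.f m y = 0 := Subtype.ext hy
          exact (S'.exact₀ m y).1 h0
        · intro hy
          have h0 : S'.ε.f m y = 0 := (S'.exact₀ m y).2 hy
          exact congrArg Subtype.val h0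
      · simp only [consDCh_succ]
        exact S'.exact i m y
    · intro i hi m
      rcases i with _ | i
      · omega
      · exact S'.bounded i (by omega) m
    · rintro (_ | i)
      · exact GC_projective X
      · exact hS'proj i

end ForwardMain

/-- A chain complex `X` of `R`-modules is exact with every cycle module `Z_m(X)` of
projective dimension at most `n` if and only if `X` has projective dimension at most `n`
in `Ch(R)`: there is an exact sequence `0 → P^n → ⋯ → P^0 → X → 0` of chain complexes
with each `P^i` a projective object of `Ch(R)`. -/
theorem exact_with_cycles_projDimLE_iff_complex_projDimLE (R : Type) [Ring R] (n : ℕ)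
    (X : ChainComplex (ModuleCat R) ℤ) :
    ((∀ m : ℤ, X.ExactAt m) ∧
      ∀ m : ℤ, HasProjDimLE R n (ModuleCat.of R (LinearMap.ker (X.d m (m - 1)).hom))) ↔
    ∃ S : ComplexSequenceTo R n X, ∀ i : ℕ, Projective (S.A i) := by
  constructor
  · rintro ⟨hex, hpd⟩
    refine forward_main n X hex ?_
    intro m
    exact ⟨ModuleCat.of R PUnit, proj_punit,
      hasProjDimLE_prod _ proj_punit (hpd m)⟩
  · rintro ⟨S, hproj⟩
    exact converse_main n X S (fun i m => (projC_facts (S.A i) (hproj i)).1 m)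
      (fun i m => (projC_facts (S.A i) (hproj i)).2 m)

end Everything
end

section
/- Let C be an abelian category with enough projectives and enough injectives, and let (A, B) be a cotorsion pair in C. Then (A, B) has enough projectives if and only if it has enough injectives (Salce's Lemma). -/
universe v u

open CategoryTheory Limits

variable {C : Type u} [Category.{v} C] [Abelian C]

/-- `Ext¹(X, Y) = 0`, expressed by the property that every short exact sequence
`0 → Y → E → X → 0` splits. -/
def Ext1Vanish (X Y : C) : Prop :=
  ∀ (E : C) (i : Y ⟶ E) (p : E ⟶ X) (w : i ≫ p = 0),
    (ShortComplex.mk i p w).ShortExact → ∃ r : E ⟶ Y, i ≫ r = 𝟙 Y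

/-- `(𝒜, ℬ)` is a cotorsion pair: `𝒜 = ⊥ℬ` and `ℬ = 𝒜⊥` with respect to `Ext¹`. -/
def IsCotorsionPair (𝒜 ℬ : C → Prop) : Prop :=
  (∀ X : C, 𝒜 X ↔ ∀ Y : C, ℬ Y → Ext1Vanish X Y) ∧
  (∀ Y : C, ℬ Y ↔ ∀ X : C, 𝒜 X → Ext1Vanish X Y)

/-- The pair `(𝒜, ℬ)` has enough projectives: every object `X` fits in a short exact
sequence `0 → B → A → X → 0` with `A ∈ 𝒜` and `B ∈ ℬ`. -/
def PairHasEnoughProjectives (𝒜 ℬ : C → Prop) : Prop :=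
  ∀ X : C, ∃ (B A : C) (i : B ⟶ A) (p : A ⟶ X) (w : i ≫ p = 0),
    (ShortComplex.mk i p w).ShortExact ∧ 𝒜 A ∧ ℬ B

/-- The pair `(𝒜, ℬ)` has enough injectives: every object `X` fits in a short exact
sequence `0 → X → B' → A' → 0` with `A' ∈ 𝒜` and `B' ∈ ℬ`. -/
def PairHasEnoughInjectives (𝒜 ℬ : C → Prop) : Prop :=
  ∀ X : C, ∃ (B' A' : C) (i : X ⟶ B') (p : B' ⟶ A') (w : i ≫ p = 0),
    (ShortComplex.mk i p w).ShortExact ∧ 𝒜 A' ∧ ℬ B'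

namespace SalceAux

open CategoryTheory.Abelian
open scoped Pseudoelement
open CategoryTheory.Abelian.Pseudoelement

variable {C : Type u} [Category.{v} C] [Abelian C]

lemma ext1Vanish_of_injective (X Y : C) [Injective Y] : Ext1Vanish X Y := by
  intro E i p w hse
  haveI : Mono i := hse.mono_f
  exact ⟨Injective.factorThru (𝟙 Y) i, Injective.comp_factorThru _ _⟩

lemma section_of_ext1Vanish {X Y : C} (h : Ext1Vanish X Y) {E : C} (i : Y ⟶ E) (p : E ⟶ X)
    (w : i ≫ p = 0) (hse : (ShortComplex.mk i p w).ShortExact) :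
    ∃ s : X ⟶ E, s ≫ p = 𝟙 X := by
  obtain ⟨r, hr⟩ := h E i p w hse
  exact ⟨(ShortComplex.Splitting.ofExactOfRetraction _ hse.exact r hr hse.epi_g).s,
    (ShortComplex.Splitting.ofExactOfRetraction _ hse.exact r hr hse.epi_g).s_g⟩

lemma retraction_of_section {X Y E : C} (i : Y ⟶ E) (p : E ⟶ X) (w : i ≫ p = 0)
    (hse : (ShortComplex.mk i p w).ShortExact) (s : X ⟶ E) (hs : s ≫ p = 𝟙 X) :
    ∃ r : E ⟶ Y, i ≫ r = 𝟙 Y :=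
  ⟨(ShortComplex.Splitting.ofExactOfSection _ hse.exact s hs hse.mono_f).r,
    (ShortComplex.Splitting.ofExactOfSection _ hse.exact s hs hse.mono_f).f_r⟩

/-- `Ext1Vanish X -` is closed under extensions. -/
lemma ext1Vanish_extension {X B P I : C} (b : B ⟶ P) (q : P ⟶ I) (wq : b ≫ q = 0)
    (hq : (ShortComplex.mk b q wq).ShortExact)
    (hB : Ext1Vanish X B) (hI : Ext1Vanish X I) : Ext1Vanish X P := by
  intro E i p w hse
  haveI : Mono i := hse.mono_f
  haveI : Epi p := hse.epi_g
  haveI : Mono b := hq.mono_f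
  haveI : Epi q := hq.epi_g
  have wj : (b ≫ i) ≫ p = 0 := by rw [Category.assoc, w, Limits.comp_zero]
  haveI : Mono (b ≫ i) := mono_comp _ _
  set π : E ⟶ cokernel (b ≫ i) := cokernel.π (b ≫ i) with hπ
  -- the induced map `I ⟶ cokernel (b ≫ i)`
  have hbiπ : b ≫ i ≫ π = 0 := by
    rw [← Category.assoc]; exact cokernel.condition _
  set ibar : I ⟶ cokernel (b ≫ i) := hq.exact.desc (i ≫ π) hbiπ with hibar
  have hgdesc : q ≫ ibar = i ≫ π := hq.exact.g_desc _ hbiπ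
  set pbar : cokernel (b ≫ i) ⟶ X := cokernel.desc (b ≫ i) p wj with hpbar
  have hπp : π ≫ pbar = p := cokernel.π_desc _ _ _
  have wbar : ibar ≫ pbar = 0 := by
    rw [← cancel_epi q, Limits.comp_zero, ← Category.assoc, hgdesc, Category.assoc, hπp, w]
  have hcokex : (ShortComplex.mk (b ≫ i) π (cokernel.condition _)).Exact :=
    ShortComplex.exact_of_g_is_cokernel _ (cokernelIsCokernel _)
  haveI hmibar : Mono ibar := by
    apply mono_of_zero_of_map_zero
    intro x hx
    obtain ⟨u, hu⟩ := pseudo_surjective_of_epi q x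
    have h1 : π (i u) = 0 := by
      rw [← Pseudoelement.comp_apply, ← hgdesc, Pseudoelement.comp_apply, hu, hx]
    obtain ⟨β, hβ⟩ := pseudo_exact_of_exact hcokex _ h1
    have : i (b β) = i u := by rw [← Pseudoelement.comp_apply]; exact hβ
    have hbu : b β = u := pseudo_injective_of_mono i this
    rw [← hu, ← hbu, ← Pseudoelement.comp_apply, wq, Pseudoelement.zero_apply]
  haveI hepbar : Epi pbar := epi_of_epi_fac hπp
  have hexact' : (ShortComplex.mk ibar pbar wbar).Exact := by
    apply exact_of_pseudo_exact
    intro x hx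
    obtain ⟨e, he⟩ := pseudo_surjective_of_epi π x
    have hpe : p e = 0 := by rw [← hπp, Pseudoelement.comp_apply, he]; exact hx
    obtain ⟨u, hu⟩ := pseudo_exact_of_exact hse.exact e hpe
    refine ⟨q u, ?_⟩
    rw [← Pseudoelement.comp_apply, hgdesc, Pseudoelement.comp_apply, hu, he]
  have hse' : (ShortComplex.mk ibar pbar wbar).ShortExact :=
    ShortComplex.ShortExact.mk' hexact' hmibar hepbar
  obtain ⟨r', hr'⟩ := hI _ ibar pbar wbar hse'
  set t : E ⟶ I := π ≫ r' with ht
  have hit : i ≫ t = q := by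
    rw [ht, ← Category.assoc, ← hgdesc, Category.assoc, hr', Category.comp_id]
  set k : kernel t ⟶ E := kernel.ι t with hk
  have hjt : (b ≫ i) ≫ t = 0 := by rw [Category.assoc, hit, wq]
  set b' : B ⟶ kernel t := kernel.lift t (b ≫ i) hjt with hb'
  have hb'k : b' ≫ k = b ≫ i := kernel.lift_ι _ _ _
  set p' : kernel t ⟶ X := k ≫ p with hp'
  have w'' : b' ≫ p' = 0 := by
    rw [hp', ← Category.assoc, hb'k, Category.assoc, w, Limits.comp_zero]
  haveI : Mono (b' ≫ k) := by rw [hb'k]; infer_instance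
  haveI hmb' : Mono b' := mono_of_mono b' k
  have hkerex : (ShortComplex.mk k t (kernel.condition _)).Exact :=
    ShortComplex.exact_of_f_is_kernel _ (kernelIsKernel _)
  haveI hep' : Epi p' := by
    apply epi_of_pseudo_surjective
    intro x
    obtain ⟨e, he⟩ := pseudo_surjective_of_epi p x
    obtain ⟨u, hu⟩ := pseudo_surjective_of_epi q (t e)
    have hte : t e = t (i u) := by rw [← Pseudoelement.comp_apply, hit, hu]
    obtain ⟨z, hz0, hz⟩ := sub_of_eq_image t e (i u) hte
    have hpz : p z = x := by
      rw [hz _ p (by rw [← Pseudoelement.comp_apply, w, Pseudoelement.zero_apply]), he]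
    obtain ⟨κ, hκ⟩ := pseudo_exact_of_exact hkerex z hz0
    refine ⟨κ, ?_⟩
    rw [hp', Pseudoelement.comp_apply, hκ, hpz]
  have hexact'' : (ShortComplex.mk b' p' w'').Exact := by
    apply exact_of_pseudo_exact
    intro κ hκ
    have h1 : p (k κ) = 0 := by rw [← Pseudoelement.comp_apply]; exact hκ
    obtain ⟨u, hu⟩ := pseudo_exact_of_exact hse.exact _ h1
    have h2 : q u = 0 := by
      rw [← hit, Pseudoelement.comp_apply, hu, ← Pseudoelement.comp_apply, kernel.condition, Pseudoelement.zero_apply]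
    obtain ⟨β, hβ⟩ := pseudo_exact_of_exact hq.exact u h2
    refine ⟨β, pseudo_injective_of_mono k ?_⟩
    rw [← Pseudoelement.comp_apply, hb'k, Pseudoelement.comp_apply]
    have : b β = u := hβ
    rw [this, hu]
  have hse'' : (ShortComplex.mk b' p' w'').ShortExact :=
    ShortComplex.ShortExact.mk' hexact'' hmb' hep'
  obtain ⟨s, hs⟩ := section_of_ext1Vanish hB b' p' w'' hse''
  have hsec : (s ≫ k) ≫ p = 𝟙 X := by rw [Category.assoc]; exact hs
  exact retraction_of_section i p w hse (s ≫ k) hsec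

/-- The two short exact sequences arising from a pullback of a surjection along a
surjection whose kernels are given. -/
lemma pullback_shortExact {X I Q A B : C} (f : X ⟶ I) (g : I ⟶ Q) (wf : f ≫ g = 0)
    (hfg : (ShortComplex.mk f g wf).ShortExact)
    (u : B ⟶ A) (v : A ⟶ Q) (wu : u ≫ v = 0)
    (huv : (ShortComplex.mk u v wu).ShortExact) :
    ∃ (ℓ : X ⟶ pullback v g) (w1 : ℓ ≫ pullback.fst v g = 0)
      (μ : B ⟶ pullback v g) (w2 : μ ≫ pullback.snd v g = 0),
      (ShortComplex.mk ℓ (pullback.fst v g) w1).ShortExact ∧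
      (ShortComplex.mk μ (pullback.snd v g) w2).ShortExact := by
  haveI : Mono f := hfg.mono_f
  haveI : Epi g := hfg.epi_g
  haveI : Mono u := huv.mono_f
  haveI : Epi v := huv.epi_g
  set ℓ : X ⟶ pullback v g := pullback.lift 0 f (by rw [wf, Limits.zero_comp]) with hℓ
  have hℓfst : ℓ ≫ pullback.fst v g = 0 := pullback.lift_fst _ _ _
  have hℓsnd : ℓ ≫ pullback.snd v g = f := pullback.lift_snd _ _ _
  set μ : B ⟶ pullback v g := pullback.lift u 0 (by rw [wu, Limits.zero_comp]) with hμ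
  have hμfst : μ ≫ pullback.fst v g = u := pullback.lift_fst _ _ _
  have hμsnd : μ ≫ pullback.snd v g = 0 := pullback.lift_snd _ _ _
  haveI : Mono (ℓ ≫ pullback.snd v g) := by rw [hℓsnd]; infer_instance
  haveI hmℓ : Mono ℓ := mono_of_mono ℓ (pullback.snd v g)
  haveI : Mono (μ ≫ pullback.fst v g) := by rw [hμfst]; infer_instance
  haveI hmμ : Mono μ := mono_of_mono μ (pullback.fst v g)
  haveI hefst : Epi (pullback.fst v g) := by
    apply epi_of_pseudo_surjective
    intro a
    obtain ⟨y, hy⟩ := pseudo_surjective_of_epi g (v a)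
    obtain ⟨s, hs1, _⟩ := pseudo_pullback (p := a) (q := y) hy.symm
    exact ⟨s, hs1⟩
  haveI hesnd : Epi (pullback.snd v g) := by
    apply epi_of_pseudo_surjective
    intro y
    obtain ⟨a, ha⟩ := pseudo_surjective_of_epi v (g y)
    obtain ⟨s, _, hs2⟩ := pseudo_pullback (p := a) (q := y) ha
    exact ⟨s, hs2⟩
  have hker1 : IsLimit (KernelFork.ofι ℓ hℓfst) := by
    refine KernelFork.IsLimit.ofι' _ _ (fun {T} h hh => ⟨hfg.exact.lift (h ≫ pullback.snd v g)
      (by rw [Category.assoc, ← pullback.condition, ← Category.assoc, hh, Limits.zero_comp]), ?_⟩)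
    apply pullback.hom_ext
    · rw [Category.assoc, hℓfst, Limits.comp_zero, hh]
    · rw [Category.assoc, hℓsnd]
      exact hfg.exact.lift_f _ _
  have hker2 : IsLimit (KernelFork.ofι μ hμsnd) := by
    refine KernelFork.IsLimit.ofι' _ _ (fun {T} h hh => ⟨huv.exact.lift (h ≫ pullback.fst v g)
      (by rw [Category.assoc, pullback.condition, ← Category.assoc, hh, Limits.zero_comp]), ?_⟩)
    apply pullback.hom_ext
    · rw [Category.assoc, hμfst]
      exact huv.exact.lift_f _ _
    · rw [Category.assoc, hμsnd, Limits.comp_zero, hh]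
  exact ⟨ℓ, hℓfst, μ, hμsnd,
    ShortComplex.ShortExact.mk' (ShortComplex.exact_of_f_is_kernel _ hker1) hmℓ hefst,
    ShortComplex.ShortExact.mk' (ShortComplex.exact_of_f_is_kernel _ hker2) hmμ hesnd⟩

lemma salce_forward [EnoughInjectives C]
    (𝒜 ℬ : C → Prop) (h : IsCotorsionPair 𝒜 ℬ)
    (hp : PairHasEnoughProjectives 𝒜 ℬ) : PairHasEnoughInjectives 𝒜 ℬ := by
  intro X
  set f : X ⟶ Injective.under X := Injective.ι X with hf
  set g : Injective.under X ⟶ cokernel f := cokernel.π f with hg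
  have wf : f ≫ g = 0 := cokernel.condition f
  have hfg : (ShortComplex.mk f g wf).ShortExact :=
    ShortComplex.ShortExact.mk'
      (ShortComplex.exact_of_g_is_cokernel _ (cokernelIsCokernel f))
      (inferInstanceAs (Mono f)) (inferInstanceAs (Epi g))
  obtain ⟨B, A, u, v, wu, huv, hA, hB⟩ := hp (cokernel f)
  obtain ⟨ℓ, w1, μ, w2, hse1, hse2⟩ := pullback_shortExact f g wf hfg u v wu huv
  refine ⟨pullback v g, A, ℓ, pullback.fst v g, w1, hse1, hA, (h.2 _).2 fun Y hY => ?_⟩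
  exact ext1Vanish_extension μ (pullback.snd v g) w2 hse2
    ((h.2 B).1 hB Y hY) (ext1Vanish_of_injective Y _)

lemma ext1Vanish_op {X Y : C} (h : Ext1Vanish X Y) :
    Ext1Vanish (C := Cᵒᵖ) (Opposite.op Y) (Opposite.op X) := by
  intro E i p w hse
  have w' : p.unop ≫ i.unop = 0 := by
    rw [← unop_comp, w]; rfl
  have hse' : (ShortComplex.mk p.unop i.unop w').ShortExact := hse.unop
  obtain ⟨s, hs⟩ := section_of_ext1Vanish h p.unop i.unop w' hse'
  refine ⟨s.op, Quiver.Hom.unop_inj ?_⟩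
  simpa using hs

lemma ext1Vanish_unop {X Y : Cᵒᵖ} (h : Ext1Vanish X Y) :
    Ext1Vanish Y.unop X.unop := by
  intro E i p w hse
  have w' : p.op ≫ i.op = 0 := by rw [← op_comp, w]; rfl
  have hse' : (ShortComplex.mk p.op i.op w').ShortExact := hse.op
  obtain ⟨r, hr⟩ := h (Opposite.op E) p.op i.op w' hse'
  have hs : r.unop ≫ p = 𝟙 _ := by
    have := congrArg Quiver.Hom.unop hr
    simpa using this
  exact retraction_of_section i p w hse r.unop hs

end SalceAux

/-- Salce's Lemma: in an abelian category with enough projectives and enough injectives,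
a cotorsion pair `(𝒜, ℬ)` has enough projectives if and only if it has enough
injectives. -/
theorem salce_lemma {C : Type u} [Category.{v} C] [Abelian C]
    [EnoughProjectives C] [EnoughInjectives C] (𝒜 ℬ : C → Prop)
    (h : IsCotorsionPair 𝒜 ℬ) :
    PairHasEnoughProjectives 𝒜 ℬ ↔ PairHasEnoughInjectives 𝒜 ℬ := by
  constructor
  · exact SalceAux.salce_forward 𝒜 ℬ h
  · intro hi
    have h' : IsCotorsionPair (C := Cᵒᵖ) (fun Y => ℬ Y.unop) (fun Y => 𝒜 Y.unop) := by
      constructor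
      · intro X'
        constructor
        · intro hX' Y hY
          exact SalceAux.ext1Vanish_op ((h.2 X'.unop).1 hX' Y.unop hY)
        · intro hall
          exact (h.2 X'.unop).2 fun Z hZ =>
            SalceAux.ext1Vanish_unop (hall (Opposite.op Z) hZ)
      · intro Y'
        constructor
        · intro hY' X' hX'
          exact SalceAux.ext1Vanish_op ((h.1 Y'.unop).1 hY' X'.unop hX')
        · intro hall
          exact (h.1 Y'.unop).2 fun Z hZ =>
            SalceAux.ext1Vanish_unop (hall (Opposite.op Z) hZ)
    have hp' : PairHasEnoughProjectives (C := Cᵒᵖ) (fun Y => ℬ Y.unop) (fun Y => 𝒜 Y.unop) := by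
      intro X'
      obtain ⟨B', A', i, p, w, hse, hA, hB⟩ := hi X'.unop
      exact ⟨Opposite.op A', Opposite.op B', p.op, i.op, (by rw [← op_comp, w]; rfl),
        hse.op, hB, hA⟩
    have hinj := SalceAux.salce_forward _ _ h' hp'
    intro X
    obtain ⟨B', A', i, p, w, hse, hA, hB⟩ := hinj (Opposite.op X)
    exact ⟨A'.unop, B'.unop, p.unop, i.unop, (by rw [← unop_comp, w]; rfl),
      hse.unop, hB, hA⟩
end

section
/- Let C be an abelian category with enough projectives and injectives and (A, B) a cotorsion pair in C. Then A is resolving (closed under kernels of epimorphisms between objects of A) if and only if B is coresolving (closed under cokernels of monomorphisms between objects of B). -/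
universe v u

open CategoryTheory Limits

variable {C : Type u} [Category.{v} C] [Abelian C]

/-- `𝒜` is closed under kernels of epimorphisms between objects of `𝒜`: for every short
exact sequence `0 → A'' → A → A' → 0` with `A, A' ∈ 𝒜` one has `A'' ∈ 𝒜`. -/
def ClassResolving (𝒜 : C → Prop) : Prop :=
  ∀ (A'' A A' : C) (i : A'' ⟶ A) (p : A ⟶ A') (w : i ≫ p = 0),
    (ShortComplex.mk i p w).ShortExact → 𝒜 A → 𝒜 A' → 𝒜 A''

/-- `ℬ` is closed under cokernels of monomorphisms between objects of `ℬ`: for every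
short exact sequence `0 → B'' → B → B' → 0` with `B'', B ∈ ℬ` one has `B' ∈ ℬ`. -/
def ClassCoresolving (ℬ : C → Prop) : Prop :=
  ∀ (B'' B B' : C) (i : B'' ⟶ B) (p : B ⟶ B') (w : i ≫ p = 0),
    (ShortComplex.mk i p w).ShortExact → ℬ B'' → ℬ B → ℬ B'

section Helpers

variable {C : Type u} [Category.{v} C] [Abelian C]

/-- If `P` is projective then `Ext¹(P, Y) = 0` for every `Y`. -/
lemma ext1Vanish_of_projective (P Y : C) [Projective P] : Ext1Vanish P Y := by
  intro E i p w hse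
  have := hse.mono_f
  have := hse.epi_g
  exact ⟨(ShortComplex.Splitting.ofExactOfSection _ hse.exact
    (Projective.factorThru (𝟙 P) p) (by simp) hse.mono_f).r,
    (ShortComplex.Splitting.ofExactOfSection _ hse.exact
    (Projective.factorThru (𝟙 P) p) (by simp) hse.mono_f).f_r⟩

/-- If `I` is injective then `Ext¹(X, I) = 0` for every `X`. -/
lemma ext1Vanish_of_injective (X I : C) [Injective I] : Ext1Vanish X I := by
  intro E i p w hse
  have := hse.mono_f
  exact ⟨Injective.factorThru (𝟙 I) i, Injective.comp_factorThru _ _⟩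

/-- Lifting through an epimorphism: given a short exact sequence `0 → Y → B → B' → 0`
and `f : K ⟶ B'` with `Ext¹(K, Y) = 0`, there is `g : K ⟶ B` with `g ≫ q = f`. -/
lemma lift_of_ext1Vanish {Y B B' K : C} (ι : Y ⟶ B) (q : B ⟶ B') (w : ι ≫ q = 0)
    (hse : (ShortComplex.mk ι q w).ShortExact) (f : K ⟶ B') (hv : Ext1Vanish K Y) :
    ∃ g : K ⟶ B, g ≫ q = f := by
  have := hse.mono_f
  have := hse.epi_g
  let Z := pullback q f
  let snd : Z ⟶ K := pullback.snd q f
  have hepi : Epi snd := inferInstance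
  have hιq : ι ≫ q = (0 : Y ⟶ K) ≫ f := by simp [w]
  let ι' : Y ⟶ Z := pullback.lift ι 0 hιq
  have hι'fst : ι' ≫ pullback.fst q f = ι := pullback.lift_fst _ _ _
  have w' : ι' ≫ snd = 0 := pullback.lift_snd _ _ _
  have hmono : Mono ι' := by
    have : Mono (ι' ≫ pullback.fst q f) := by rw [hι'fst]; infer_instance
    exact mono_of_mono ι' (pullback.fst q f)
  let S' : ShortComplex C := ShortComplex.mk ι' snd w'
  have hS'exact : S'.Exact := by
    apply ShortComplex.exact_of_f_is_kernel
    refine KernelFork.IsLimit.ofι' _ _ (fun {T} t ht => ?_)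
    · refine ⟨hse.exact.lift (t ≫ pullback.fst q f) ?_, ?_⟩
      · rw [Category.assoc, pullback.condition, ← Category.assoc, ht, zero_comp]
      · apply pullback.hom_ext
        · show (_ ≫ ι') ≫ pullback.fst q f = _
          rw [Category.assoc, hι'fst]; exact hse.exact.lift_f _ _
        · show (_ ≫ ι') ≫ snd = _ ≫ snd
          rw [Category.assoc, w', comp_zero]; exact ht.symm
  have hse' : S'.ShortExact := { exact := hS'exact, mono_f := hmono, epi_g := hepi }
  obtain ⟨r, hr⟩ := hv Z ι' snd w' hse'
  let spl := ShortComplex.Splitting.ofExactOfRetraction S' hS'exact r hr hepi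
  refine ⟨spl.s ≫ pullback.fst q f, ?_⟩
  rw [Category.assoc, pullback.condition, ← Category.assoc]
  have : spl.s ≫ snd = 𝟙 K := spl.s_g
  rw [show spl.s ≫ pullback.snd q f = 𝟙 K from this, Category.id_comp]

/-- Extending along a monomorphism: given a short exact sequence `0 → K → P → A → 0`
and `g : K ⟶ B` with `Ext¹(A, B) = 0`, there is `G : P ⟶ B` with `k ≫ G = g`. -/
lemma extend_of_ext1Vanish {K P A B : C} (k : K ⟶ P) (π : P ⟶ A) (w : k ≫ π = 0)
    (hse : (ShortComplex.mk k π w).ShortExact) (g : K ⟶ B) (hv : Ext1Vanish A B) :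
    ∃ G : P ⟶ B, k ≫ G = g := by
  have := hse.mono_f
  have := hse.epi_g
  let W := pushout k g
  let inr : B ⟶ W := pushout.inr k g
  have hmono : Mono inr := inferInstance
  have hkπ : k ≫ π = g ≫ (0 : B ⟶ A) := by simp [w]
  let π' : W ⟶ A := pushout.desc π 0 hkπ
  have hinlπ' : pushout.inl k g ≫ π' = π := pushout.inl_desc _ _ _
  have w' : inr ≫ π' = 0 := pushout.inr_desc _ _ _
  have hepi : Epi π' := by
    have : Epi (pushout.inl k g ≫ π') := by rw [hinlπ']; infer_instance
    exact epi_of_epi (pushout.inl k g) π'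
  let S' : ShortComplex C := ShortComplex.mk inr π' w'
  have hS'exact : S'.Exact := by
    apply ShortComplex.exact_of_g_is_cokernel
    refine CokernelCofork.IsColimit.ofπ' _ _ (fun {T} t ht => ?_)
    · refine ⟨hse.exact.desc (pushout.inl k g ≫ t) ?_, ?_⟩
      · rw [← Category.assoc, pushout.condition, Category.assoc, ht, comp_zero]
      · apply pushout.hom_ext
        · show pushout.inl k g ≫ (π' ≫ _) = _
          rw [← Category.assoc, hinlπ']; exact hse.exact.g_desc _ _
        · show inr ≫ (π' ≫ _) = inr ≫ t
          rw [← Category.assoc, w', zero_comp]; exact ht.symm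
  have hse' : S'.ShortExact := { exact := hS'exact, mono_f := hmono, epi_g := hepi }
  obtain ⟨ρ, hρ⟩ := hv W inr π' w' hse'
  refine ⟨pushout.inl k g ≫ ρ, ?_⟩
  rw [← Category.assoc, pushout.condition, Category.assoc,
    show pushout.inr k g ≫ ρ = 𝟙 B from hρ, Category.comp_id]

end Helpers

/-- For a cotorsion pair `(𝒜, ℬ)` in an abelian category with enough projectives and
injectives, `𝒜` is resolving (closed under kernels of epimorphisms between objects of
`𝒜`) if and only if `ℬ` is coresolving (closed under cokernels of monomorphisms between
objects of `ℬ`). -/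
theorem resolving_iff_coresolving {C : Type u} [Category.{v} C] [Abelian C]
    [EnoughProjectives C] [EnoughInjectives C] (𝒜 ℬ : C → Prop)
    (h : IsCotorsionPair 𝒜 ℬ) :
    ClassResolving 𝒜 ↔ ClassCoresolving ℬ := by
  constructor
  · -- 𝒜 resolving → ℬ coresolving
    intro hres B'' B B' ι q wB hseB hB'' hB
    rw [h.2]
    intro A hA E i p wE hE
    have := hE.mono_f
    have := hE.epi_g
    -- projective presentation of A
    set P := Projective.over A with hP_def
    set π : P ⟶ A := Projective.π A with hπ_def
    set K := kernel π with hK_def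
    set k : K ⟶ P := kernel.ι π with hk_def
    have wP : k ≫ π = 0 := kernel.condition π
    have hseP : (ShortComplex.mk k π wP).ShortExact := by
      refine { exact := ?_, mono_f := inferInstance, epi_g := inferInstance }
      exact ShortComplex.exact_of_f_is_kernel _ (kernelIsKernel π)
    -- P ∈ 𝒜, K ∈ 𝒜
    have hPA : 𝒜 P := (h.1 P).2 (fun Y _ => ext1Vanish_of_projective P Y)
    have hKA : 𝒜 K := hres K P A k π wP hseP hPA hA
    -- lift π through p
    let h0 : P ⟶ E := Projective.factorThru π p
    have hh0 : h0 ≫ p = π := Projective.factorThru_comp _ _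
    -- induced map f : K ⟶ B'
    have hkh0 : (k ≫ h0) ≫ p = 0 := by rw [Category.assoc, hh0, wP]
    let f : K ⟶ B' := hE.exact.lift (k ≫ h0) hkh0
    have hf : f ≫ i = k ≫ h0 := hE.exact.lift_f _ _
    -- lift f through q using Ext¹(K, B'') = 0
    obtain ⟨g, hg⟩ := lift_of_ext1Vanish ι q wB hseB f ((h.1 K).1 hKA B'' hB'')
    -- extend g along k using Ext¹(A, B) = 0
    obtain ⟨G, hG⟩ := extend_of_ext1Vanish k π wP hseP g ((h.1 A).1 hA B hB)
    -- build a section of p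
    have hd : k ≫ (h0 - G ≫ q ≫ i) = 0 := by
      rw [Preadditive.comp_sub, ← Category.assoc, hG, ← Category.assoc, hg, hf, sub_self]
    let u : A ⟶ E := hseP.exact.desc (h0 - G ≫ q ≫ i) hd
    have hu : π ≫ u = h0 - G ≫ q ≫ i := hseP.exact.g_desc _ _
    have hup : u ≫ p = 𝟙 A := by
      rw [← cancel_epi π, ← Category.assoc, hu, Preadditive.sub_comp, hh0,
        Category.assoc, Category.assoc, wE, comp_zero, comp_zero, sub_zero,
        Category.comp_id]
    exact ⟨(ShortComplex.Splitting.ofExactOfSection _ hE.exact u hup hE.mono_f).r,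
      (ShortComplex.Splitting.ofExactOfSection _ hE.exact u hup hE.mono_f).f_r⟩
  · -- ℬ coresolving → 𝒜 resolving
    intro hcor A'' A A' j ρ wA hseA hA hA'
    rw [h.1]
    intro Bo hB E i p wE hE
    have := hE.mono_f
    have := hE.epi_g
    -- injective copresentation of Bo
    set I := Injective.under Bo with hI_def
    set ι : Bo ⟶ I := Injective.ι Bo with hι_def
    set Q := cokernel ι with hQ_def
    set πQ : I ⟶ Q := cokernel.π ι with hπQ_def
    have wI : ι ≫ πQ = 0 := cokernel.condition ι
    have hseI : (ShortComplex.mk ι πQ wI).ShortExact := by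
      refine { exact := ?_, mono_f := inferInstance, epi_g := inferInstance }
      exact ShortComplex.exact_of_g_is_cokernel _ (cokernelIsCokernel ι)
    -- I ∈ ℬ, Q ∈ ℬ
    have hIB : ℬ I := (h.2 I).2 (fun X _ => ext1Vanish_of_injective X I)
    have hQB : ℬ Q := hcor Bo I Q ι πQ wI hseI hB hIB
    -- extend ι through i
    let h0 : E ⟶ I := Injective.factorThru ι i
    have hh0 : i ≫ h0 = ι := Injective.comp_factorThru _ _
    -- induced map f : A'' ⟶ Q
    have hih0 : i ≫ (h0 ≫ πQ) = 0 := by rw [← Category.assoc, hh0, wI]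
    let f : A'' ⟶ Q := hE.exact.desc (h0 ≫ πQ) hih0
    have hf : p ≫ f = h0 ≫ πQ := hE.exact.g_desc _ _
    -- extend f along j using Ext¹(A', Q) = 0
    obtain ⟨g, hg⟩ := extend_of_ext1Vanish j ρ wA hseA f ((h.2 Q).1 hQB A' hA')
    -- lift g through πQ using Ext¹(A, Bo) = 0
    obtain ⟨G, hG⟩ := lift_of_ext1Vanish ι πQ wI hseI g ((h.2 Bo).1 hB A hA)
    -- build a retraction of i
    have hd : (h0 - p ≫ j ≫ G) ≫ πQ = 0 := by
      rw [Preadditive.sub_comp, Category.assoc, Category.assoc, hG, hg, hf, sub_self]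
    let u : E ⟶ Bo := hseI.exact.lift (h0 - p ≫ j ≫ G) hd
    have hu : u ≫ ι = h0 - p ≫ j ≫ G := hseI.exact.lift_f _ _
    refine ⟨u, ?_⟩
    rw [← cancel_mono ι, Category.assoc, hu, Preadditive.comp_sub, hh0,
      ← Category.assoc, ← Category.assoc, wE, zero_comp, zero_comp, sub_zero,
      Category.id_comp]
end

section
/- Let X be a left R-module with projective dimension at most n, and let x ∈ X. Then there exists a submodule X' ⊆ X containing x with card(X') ≤ κ, such that both X' and X/X' have projective dimension at most n, where κ is any infinite cardinal with κ ≥ card(R). -/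
open CategoryTheory

namespace SmallProjAux

open Finsupp

/-! ### Cardinality lemmas -/

theorem mk_finsupp_le {κ : Cardinal} (hκ : Cardinal.aleph0 ≤ κ) {R α : Type} [Zero R]
    (hR : Cardinal.mk R ≤ κ) (hα : Cardinal.mk α ≤ κ) : Cardinal.mk (α →₀ R) ≤ κ := by
  have h1 : Cardinal.mk (α →₀ R) ≤ Cardinal.mk (Finset (α × R)) :=
    Cardinal.mk_le_of_injective (Finsupp.graph_injective α R)
  refine h1.trans ?_
  have hprod : Cardinal.mk (α × R) ≤ κ := by
    rw [Cardinal.mk_prod, Cardinal.lift_id, Cardinal.lift_id]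
    exact (Cardinal.mul_le_max _ _).trans (by simp [hα, hR, hκ])
  cases finite_or_infinite (α × R) with
  | inl h =>
    exact (Cardinal.mk_le_aleph0).trans hκ
  | inr h =>
    rw [Cardinal.mk_finset_of_infinite]
    exact hprod

theorem mk_supported_le {κ : Cardinal} (hκ : Cardinal.aleph0 ≤ κ) {R : Type} [Ring R]
    (hR : Cardinal.mk R ≤ κ) {α : Type} {S : Set α} (hS : Cardinal.mk S ≤ κ) :
    Cardinal.mk (Finsupp.supported R R S) ≤ κ := by
  rw [Cardinal.mk_congr (Finsupp.supportedEquivFinsupp S).toEquiv]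
  exact mk_finsupp_le hκ hR hS

theorem mk_biUnion_le' {κ : Cardinal} (hκ : Cardinal.aleph0 ≤ κ) {α β : Type}
    (s : Set α) (A : α → Set β) (hs : Cardinal.mk s ≤ κ)
    (hA : ∀ a, Cardinal.mk (A a) ≤ Cardinal.aleph0) :
    Cardinal.mk (⋃ a ∈ s, A a) ≤ κ := by
  rcases s.eq_empty_or_nonempty with rfl | hne
  · simp
  · have := hne.to_subtype
    refine (Cardinal.mk_biUnion_le A s).trans ?_
    have : ⨆ a : s, Cardinal.mk (A a) ≤ Cardinal.aleph0 := ciSup_le' fun a => hA a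
    exact (mul_le_mul' hs this).trans (by simpa [Cardinal.mul_aleph0_eq hκ])

theorem mk_finset_coe_le_aleph0 {β : Type} (t : Finset β) :
    Cardinal.mk (↑t : Set β) ≤ Cardinal.aleph0 :=
  Cardinal.mk_le_aleph0

/-! ### Misc module lemmas -/

theorem subsingleton_submodule {R M : Type} [Ring R] [AddCommGroup M] [Module R M]
    [Subsingleton M] (p : Submodule R M) : Subsingleton p :=
  ⟨fun a b => Subtype.ext (Subsingleton.elim _ _)⟩

theorem subsingleton_quotient {R M : Type} [Ring R] [AddCommGroup M] [Module R M]
    [Subsingleton M] (p : Submodule R M) : Subsingleton (M ⧸ p) := by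
  constructor
  intro a b
  obtain ⟨a, rfl⟩ := Submodule.Quotient.mk_surjective _ a
  obtain ⟨b, rfl⟩ := Submodule.Quotient.mk_surjective _ b
  exact congrArg _ (Subsingleton.elim a b)

theorem isCompl_supported {R α : Type} [Ring R] (S : Set α) :
    IsCompl (Finsupp.supported R R S) (Finsupp.supported R R Sᶜ) := by
  constructor
  · exact Finsupp.disjoint_supported_supported disjoint_compl_right
  · rw [codisjoint_iff, ← Finsupp.supported_union, Set.union_compl_self,
      Finsupp.supported_univ]

theorem projective_supported {R α : Type} [Ring R] (S : Set α) :
    Module.Projective R (Finsupp.supported R R S) :=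
  Module.Projective.of_equiv (Finsupp.supportedEquivFinsupp (M := R) (R := R) S).symm

theorem projective_quot_supported {R α : Type} [Ring R] (S : Set α) :
    Module.Projective R ((α →₀ R) ⧸ Finsupp.supported R R S) := by
  have := projective_supported (R := R) Sᶜ
  exact Module.Projective.of_equiv (Submodule.quotientEquivOfIsCompl _ _
    (isCompl_supported S)).symm

/-! ### The zig-zag construction -/

section Main

variable {R : Type} [Ring R] {n : ℕ} {X : Type} [AddCommGroup X] [Module R X]
variable (res : ResolutionOfLength R n (ModuleCat.of R X))
variable (hp : ∀ i : ℕ, Module.Projective R (res.P i))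

/-- A splitting of the canonical surjection `(P i →₀ R) → P i`. -/
noncomputable def sig (i : ℕ) : res.P i →ₗ[R] (res.P i →₀ R) :=
  (Module.projective_def.mp (hp i)).choose

/-- The canonical surjection `(P i →₀ R) → P i`. -/
noncomputable def pim (i : ℕ) : (res.P i →₀ R) →ₗ[R] res.P i :=
  Finsupp.linearCombination R id

theorem pim_sig (i : ℕ) (p : res.P i) : pim res i (sig res hp i p) = p :=
  (Module.projective_def.mp (hp i)).choose_spec p

theorem sig_inj (i : ℕ) : Function.Injective (sig res hp i) :=
  Function.LeftInverse.injective (pim_sig res hp i)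

open Classical in
/-- Choice of preimages witnessing exactness in positive degrees. -/
noncomputable def wit (i : ℕ) (p : res.P (i + 1)) : res.P (i + 2) :=
  if h : res.d i p = 0 then ((res.exact i p).mp h).choose else 0

theorem wit_spec (i : ℕ) (p : res.P (i + 1)) (h : res.d i p = 0) :
    res.d (i + 1) (wit res i p) = p := by
  rw [wit]
  rw [dif_pos h]
  exact ((res.exact i p).mp h).choose_spec

open Classical in
/-- Choice of preimages witnessing exactness in degree 0. -/
noncomputable def wit0 (p : res.P 0) : res.P 1 :=
  if h : res.ε p = 0 then ((res.exact₀ p).mp h).choose else 0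

theorem wit0_spec (p : res.P 0) (h : res.ε p = 0) :
    res.d 0 (wit0 res p) = p := by
  rw [wit0]
  rw [dif_pos h]
  exact ((res.exact₀ p).mp h).choose_spec

/-- The submodule of `P i` of elements whose image under `sig` is supported on `S`. -/
noncomputable def PSub (i : ℕ) (S : Set (res.P i)) : Submodule R (res.P i) :=
  Submodule.comap (sig res hp i) (Finsupp.supported R R S)

theorem mem_PSub {i : ℕ} {S : Set (res.P i)} {p : res.P i} :
    p ∈ PSub res hp i S ↔ sig res hp i p ∈ Finsupp.supported R R S := Iff.rfl

/-- Closure adding witnesses of exactness. -/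
noncomputable def wcl (S : ∀ i : ℕ, Set (res.P i)) : ∀ i : ℕ, Set (res.P i)
  | 0 => ∅
  | 1 => ⋃ p ∈ {p : res.P 0 | p ∈ PSub res hp 0 (S 0) ∧ res.ε p = 0},
      ↑(sig res hp 1 (wit0 res p)).support
  | (j + 2) => ⋃ p ∈ {p : res.P (j + 1) | p ∈ PSub res hp (j + 1) (S (j + 1)) ∧ res.d j p = 0},
      ↑(sig res hp (j + 2) (wit res j p)).support

/-- One closure step. -/
noncomputable def step (S : ∀ i : ℕ, Set (res.P i)) (i : ℕ) : Set (res.P i) :=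
  S i ∪ (⋃ c ∈ S i, ↑(sig res hp i c).support)
    ∪ (⋃ p ∈ (PSub res hp (i + 1) (S (i + 1)) : Set (res.P (i + 1))),
        ↑(sig res hp i (res.d i p)).support)
    ∪ wcl res hp S i

/-- Iterated closure, seeded with a preimage of `x`. -/
noncomputable def chain (x : X) : ℕ → ∀ i : ℕ, Set (res.P i)
  | 0, 0 => ↑(sig res hp 0 ((res.surj x).choose)).support
  | 0, _ + 1 => ∅
  | (k + 1), i => step res hp (chain x k) i

theorem chain_mono (x : X) (k i : ℕ) :
    chain res hp x k i ⊆ chain res hp x (k + 1) i := fun c hc =>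
  Set.mem_union_left _ (Set.mem_union_left _ (Set.mem_union_left _ hc))

theorem chain_monotone (x : X) (i : ℕ) : Monotone fun k => chain res hp x k i :=
  monotone_nat_of_le_succ fun k => chain_mono res hp x k i

/-- The final support sets. -/
noncomputable def Sfin (x : X) (i : ℕ) : Set (res.P i) := ⋃ k, chain res hp x k i

theorem chain_subset_Sfin (x : X) (k i : ℕ) : chain res hp x k i ⊆ Sfin res hp x i :=
  show chain res hp x k i ⊆ ⋃ k, chain res hp x k i from
    Set.subset_iUnion (fun k => chain res hp x k i) k

/-- The submodules `P'_i`. -/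
noncomputable def Psm (x : X) (i : ℕ) : Submodule R (res.P i) :=
  PSub res hp i (Sfin res hp x i)

theorem mem_Psm_iff_exists {x : X} {i : ℕ} {p : res.P i} (h : p ∈ Psm res hp x i) :
    ∃ k, p ∈ PSub res hp i (chain res hp x k i) := by
  have hdir : Directed (· ⊆ ·) fun k => chain res hp x k i :=
    (chain_monotone res hp x i).directed_le
  have h' : ↑(sig res hp i p).support ⊆ ⋃ k, chain res hp x k i := h
  obtain ⟨k, hk⟩ := hdir.exists_mem_subset_of_finset_subset_biUnion
    (s := (sig res hp i p).support) h'
  exact ⟨k, hk⟩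

theorem seed_mem (x : X) : (res.surj x).choose ∈ Psm res hp x 0 := by
  show ↑(sig res hp 0 ((res.surj x).choose)).support ⊆ Sfin res hp x 0
  exact chain_subset_Sfin res hp x 0 0

theorem Sfin_eclosed {x : X} {i : ℕ} {c : res.P i} (hc : c ∈ Sfin res hp x i) :
    sig res hp i c ∈ Finsupp.supported R R (Sfin res hp x i) := by
  obtain ⟨t, ⟨k, rfl⟩, hk⟩ := hc
  show ↑(sig res hp i c).support ⊆ Sfin res hp x i
  intro b hb
  refine chain_subset_Sfin res hp x (k + 1) i ?_
  exact Set.mem_union_left _ (Set.mem_union_left _ (Set.mem_union_right _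
    (Set.mem_biUnion hk hb)))

theorem Sfin_dclosed {x : X} {i : ℕ} {p : res.P (i + 1)}
    (hmem : p ∈ Psm res hp x (i + 1)) : res.d i p ∈ Psm res hp x i := by
  obtain ⟨k, hk⟩ := mem_Psm_iff_exists res hp hmem
  show ↑(sig res hp i (res.d i p)).support ⊆ Sfin res hp x i
  intro b hb
  refine chain_subset_Sfin res hp x (k + 1) i ?_
  exact Set.mem_union_left _ (Set.mem_union_right _ (Set.mem_biUnion hk hb))

theorem Sfin_w0closed {x : X} {p : res.P 0} (hmem : p ∈ Psm res hp x 0)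
    (hz : res.ε p = 0) : wit0 res p ∈ Psm res hp x 1 := by
  obtain ⟨k, hk⟩ := mem_Psm_iff_exists res hp hmem
  show ↑(sig res hp 1 (wit0 res p)).support ⊆ Sfin res hp x 1
  intro b hb
  refine chain_subset_Sfin res hp x (k + 1) 1 ?_
  refine Set.mem_union_right _ ?_
  show b ∈ wcl res hp (chain res hp x k) 1
  rw [wcl]
  exact Set.mem_biUnion ⟨hk, hz⟩ hb

theorem Sfin_wclosed {x : X} {j : ℕ} {p : res.P (j + 1)} (hmem : p ∈ Psm res hp x (j + 1))
    (hz : res.d j p = 0) : wit res j p ∈ Psm res hp x (j + 2) := by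
  obtain ⟨k, hk⟩ := mem_Psm_iff_exists res hp hmem
  show ↑(sig res hp (j + 2) (wit res j p)).support ⊆ Sfin res hp x (j + 2)
  intro b hb
  refine chain_subset_Sfin res hp x (k + 1) (j + 2) ?_
  refine Set.mem_union_right _ ?_
  show b ∈ wcl res hp (chain res hp x k) (j + 2)
  rw [wcl]
  exact Set.mem_biUnion ⟨hk, hz⟩ hb

/-! ### Cardinality of the construction -/

theorem mk_PSub_le {κ : Cardinal} (hκ : Cardinal.aleph0 ≤ κ) (hR : Cardinal.mk R ≤ κ)
    {i : ℕ} {S : Set (res.P i)} (hS : Cardinal.mk S ≤ κ) :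
    Cardinal.mk (PSub res hp i S) ≤ κ := by
  refine le_trans (Cardinal.mk_le_of_injective
    (f := fun p : PSub res hp i S => (⟨sig res hp i p, p.2⟩ : Finsupp.supported R R S)) ?_) ?_
  · intro a b hab
    exact Subtype.ext (sig_inj res hp i (congrArg Subtype.val hab))
  · exact mk_supported_le hκ hR hS

theorem mk_chain_le {κ : Cardinal} (hκ : Cardinal.aleph0 ≤ κ) (hR : Cardinal.mk R ≤ κ)
    (x : X) (k : ℕ) (i : ℕ) : Cardinal.mk (chain res hp x k i) ≤ κ := by
  induction k generalizing i with
  | zero =>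
    cases i with
    | zero => exact (mk_finset_coe_le_aleph0 _).trans hκ
    | succ i => simp [chain]
  | succ k ih =>
    show Cardinal.mk (step res hp (chain res hp x k) i) ≤ κ
    rw [step]
    refine le_trans (Cardinal.mk_union_le _ _) ?_
    have h4 : Cardinal.mk (wcl res hp (chain res hp x k) i) ≤ κ := by
      match i with
      | 0 => simp [wcl]
      | 1 =>
        rw [wcl]
        refine mk_biUnion_le' hκ _ _ ?_ ?_
        · refine le_trans (Cardinal.mk_le_mk_of_subset fun p hps => hps.1) ?_
          exact mk_PSub_le res hp hκ hR (ih 0)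
        · exact fun a => mk_finset_coe_le_aleph0 _
      | (j + 2) =>
        rw [wcl]
        refine mk_biUnion_le' hκ _ _ ?_ ?_
        · refine le_trans (Cardinal.mk_le_mk_of_subset fun p hps => hps.1) ?_
          exact mk_PSub_le res hp hκ hR (ih (j + 1))
        · exact fun a => mk_finset_coe_le_aleph0 _
    have h123 : Cardinal.mk
        ((chain res hp x k i ∪ (⋃ c ∈ chain res hp x k i, ↑(sig res hp i c).support))
          ∪ (⋃ p ∈ (PSub res hp (i + 1) (chain res hp x k (i + 1)) : Set (res.P (i + 1))),
            ↑(sig res hp i (res.d i p)).support) : Set (res.P i)) ≤ κ := by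
      refine le_trans (Cardinal.mk_union_le _ _) ?_
      have h12 : Cardinal.mk
          ((chain res hp x k i ∪ (⋃ c ∈ chain res hp x k i, ↑(sig res hp i c).support)) :
            Set (res.P i)) ≤ κ := by
        refine le_trans (Cardinal.mk_union_le _ _) ?_
        have hb : Cardinal.mk (⋃ c ∈ chain res hp x k i,
            (↑(sig res hp i c).support : Set (res.P i))) ≤ κ := by
          refine mk_biUnion_le' hκ _ _ ?_ ?_
          · exact ih i
          · exact fun a => mk_finset_coe_le_aleph0 _
        simpa using Cardinal.add_le_of_le hκ (ih i) hb
      have h3 : Cardinal.mk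
          (⋃ p ∈ (PSub res hp (i + 1) (chain res hp x k (i + 1)) : Set (res.P (i + 1))),
            (↑(sig res hp i (res.d i p)).support : Set (res.P i))) ≤ κ := by
        refine mk_biUnion_le' hκ _ _ ?_ ?_
        · exact mk_PSub_le res hp hκ hR (ih (i + 1))
        · exact fun a => mk_finset_coe_le_aleph0 _
      simpa using Cardinal.add_le_of_le hκ h12 h3
    simpa using Cardinal.add_le_of_le hκ h123 h4

theorem mk_Sfin_le {κ : Cardinal} (hκ : Cardinal.aleph0 ≤ κ) (hR : Cardinal.mk R ≤ κ)
    (x : X) (i : ℕ) : Cardinal.mk (Sfin res hp x i) ≤ κ := by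
  refine le_trans (Cardinal.mk_iUnion_le _) ?_
  have h1 : ⨆ k, Cardinal.mk (chain res hp x k i) ≤ κ :=
    ciSup_le' fun k => mk_chain_le res hp hκ hR x k i
  refine le_trans (mul_le_mul' (le_of_eq Cardinal.mk_nat) h1) ?_
  rw [mul_comm]
  exact (Cardinal.mul_aleph0_eq hκ).le

theorem mk_Psm_le {κ : Cardinal} (hκ : Cardinal.aleph0 ≤ κ) (hR : Cardinal.mk R ≤ κ)
    (x : X) (i : ℕ) : Cardinal.mk (Psm res hp x i) ≤ κ :=
  mk_PSub_le res hp hκ hR (mk_Sfin_le res hp hκ hR x i)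

/-! ### Projectivity of `P'_i` and `P_i ⧸ P'_i` -/

theorem pim_mem {x : X} {i : ℕ} {f : res.P i →₀ R}
    (hf : f ∈ Finsupp.supported R R (Sfin res hp x i)) :
    pim res i f ∈ Psm res hp x i := by
  show sig res hp i (pim res i f) ∈ Finsupp.supported R R (Sfin res hp x i)
  have hf' : ↑f.support ⊆ Sfin res hp x i := hf
  have h1 : pim res i f = f.sum fun c r => r • c := by
    simp [pim, Finsupp.linearCombination_apply]
  rw [h1, Finsupp.sum, map_sum]
  refine Submodule.sum_mem _ fun c hc => ?_
  rw [map_smul]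
  exact Submodule.smul_mem _ _ (Sfin_eclosed res hp (hf' (Finset.mem_coe.mpr hc)))

theorem projective_Psm (x : X) (i : ℕ) : Module.Projective R (Psm res hp x i) := by
  have := projective_supported (R := R) (Sfin res hp x i)
  refine Module.Projective.of_split
    ((sig res hp i).restrict (p := Psm res hp x i)
      (q := Finsupp.supported R R (Sfin res hp x i)) fun p hp' => hp')
    ((pim res i).restrict (p := Finsupp.supported R R (Sfin res hp x i))
      (q := Psm res hp x i) fun f hf => pim_mem res hp hf) ?_
  refine LinearMap.ext fun p => ?_
  exact Subtype.ext (pim_sig res hp i p.1)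

theorem projective_quot_Psm (x : X) (i : ℕ) :
    Module.Projective R (res.P i ⧸ Psm res hp x i) := by
  have := projective_quot_supported (R := R) (Sfin res hp x i)
  refine Module.Projective.of_split
    (Submodule.mapQ (Psm res hp x i) (Finsupp.supported R R (Sfin res hp x i))
      (sig res hp i) fun p hp' => hp')
    (Submodule.mapQ (Finsupp.supported R R (Sfin res hp x i)) (Psm res hp x i)
      (pim res i) fun f hf => pim_mem res hp hf) ?_
  refine LinearMap.ext fun q => ?_
  obtain ⟨p, rfl⟩ := Submodule.Quotient.mk_surjective _ q
  show Submodule.Quotient.mk (pim res i (sig res hp i p)) = Submodule.Quotient.mk p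
  rw [pim_sig res hp i p]

/-! ### The submodule `X'` -/

/-- The small submodule `X' ⊆ X`. -/
noncomputable def Xsm (x : X) : Submodule R X :=
  Submodule.map res.ε.hom (Psm res hp x 0)

theorem x_mem_Xsm (x : X) : x ∈ Xsm res hp x :=
  ⟨(res.surj x).choose, seed_mem res hp x, (res.surj x).choose_spec⟩

theorem mk_Xsm_le {κ : Cardinal} (hκ : Cardinal.aleph0 ≤ κ) (hR : Cardinal.mk R ≤ κ)
    (x : X) : Cardinal.mk (Xsm res hp x) ≤ κ := by
  refine le_trans (Cardinal.mk_le_of_surjective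
    (f := fun p : Psm res hp x 0 => (⟨res.ε p.1, Submodule.mem_map_of_mem p.2⟩ :
      Xsm res hp x)) ?_) (mk_Psm_le res hp hκ hR x 0)
  rintro ⟨y, p, hmem, rfl⟩
  exact ⟨⟨p, hmem⟩, rfl⟩

/-! ### Exactness of the sub- and quotient complexes -/

theorem d_mem {x : X} {i : ℕ} {p : res.P (i + 1)} (h : p ∈ Psm res hp x (i + 1)) :
    res.d i p ∈ Psm res hp x i :=
  Sfin_dclosed res hp h

theorem eps_mem {x : X} {p : res.P 0} (h : p ∈ Psm res hp x 0) :
    res.ε p ∈ Xsm res hp x :=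
  Submodule.mem_map_of_mem h

theorem sub_exact_lift0 {x : X} {q : res.P 0} (hq : q ∈ Psm res hp x 0)
    (hz : res.ε q = 0) : ∃ u ∈ Psm res hp x 1, res.d 0 u = q :=
  ⟨wit0 res q, Sfin_w0closed res hp hq hz, wit0_spec res q hz⟩

theorem sub_exact_lift {x : X} {j : ℕ} {q : res.P (j + 1)} (hq : q ∈ Psm res hp x (j + 1))
    (hz : res.d j q = 0) : ∃ u ∈ Psm res hp x (j + 2), res.d (j + 1) u = q :=
  ⟨wit res j q, Sfin_wclosed res hp hq hz, wit_spec res j q hz⟩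

/-! ### The sub-resolution -/

/-- The resolution of `X'` by the submodules `P'_i`. -/
noncomputable def subRes (x : X) :
    ResolutionOfLength R n (ModuleCat.of R (Xsm res hp x)) where
  P i := ModuleCat.of R (Psm res hp x i)
  d i := ModuleCat.ofHom ((res.d i).hom.restrict fun p hp' => d_mem res hp hp')
  ε := ModuleCat.ofHom (res.ε.hom.restrict fun p hp' => eps_mem res hp hp')
  surj := by
    rintro ⟨y, p, hmem, rfl⟩
    exact ⟨⟨p, hmem⟩, rfl⟩
  exact₀ := by
    intro z
    constructor
    · intro h
      have hz : res.ε z.1 = 0 := congrArg Subtype.val h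
      obtain ⟨u, hu, hdu⟩ := sub_exact_lift0 res hp z.2 hz
      exact ⟨⟨u, hu⟩, Subtype.ext hdu⟩
    · rintro ⟨u, rfl⟩
      exact Subtype.ext (res.exact₀.apply_apply_eq_zero u.1)
  exact := by
    intro i z
    constructor
    · intro h
      have hz : res.d i z.1 = 0 := congrArg Subtype.val h
      obtain ⟨u, hu, hdu⟩ := sub_exact_lift res hp z.2 hz
      exact ⟨⟨u, hu⟩, Subtype.ext hdu⟩
    · rintro ⟨u, rfl⟩
      exact Subtype.ext ((res.exact i).apply_apply_eq_zero u.1)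
  bounded := by
    intro i hi
    have := res.bounded i hi
    exact subsingleton_submodule _

/-! ### The quotient resolution -/

/-- The resolution of `X ⧸ X'` by the quotients `P_i ⧸ P'_i`. -/
noncomputable def quotRes (x : X) :
    ResolutionOfLength R n (ModuleCat.of R (X ⧸ Xsm res hp x)) where
  P i := ModuleCat.of R (res.P i ⧸ Psm res hp x i)
  d i := ModuleCat.ofHom (Submodule.mapQ _ _ (res.d i).hom fun p hp' => d_mem res hp hp')
  ε := ModuleCat.ofHom (Submodule.mapQ (Psm res hp x 0) (Xsm res hp x) res.ε.hom
    fun p hp' => eps_mem res hp hp')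
  surj := by
    intro yq
    obtain ⟨y, rfl⟩ := Submodule.Quotient.mk_surjective _ yq
    obtain ⟨p, hpy⟩ := res.surj y
    refine ⟨Submodule.Quotient.mk p, ?_⟩
    erw [ModuleCat.ofHom_apply, Submodule.mapQ_apply]
    exact congrArg _ hpy
  exact₀ := by
    intro zq
    obtain ⟨z, rfl⟩ := Submodule.Quotient.mk_surjective _ zq
    constructor
    · intro h
      erw [ModuleCat.ofHom_apply, Submodule.mapQ_apply] at h
      rw [Submodule.Quotient.mk_eq_zero] at h
      obtain ⟨p, hpmem, hpz⟩ := h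
      have hpz' : res.ε p = res.ε z := hpz
      have : res.ε (z - p) = 0 := by rw [map_sub, hpz', sub_self]
      obtain ⟨u, hu⟩ := (res.exact₀ (z - p)).mp this
      refine ⟨Submodule.Quotient.mk u, ?_⟩
      erw [ModuleCat.ofHom_apply, Submodule.mapQ_apply]
      rw [hu, Submodule.Quotient.eq]
      simpa using Submodule.neg_mem _ hpmem
    · rintro ⟨uq, huq⟩
      obtain ⟨u, rfl⟩ := Submodule.Quotient.mk_surjective _ uq
      rw [← huq]
      erw [ModuleCat.ofHom_apply, Submodule.mapQ_apply]
      have h0 : res.ε (res.d 0 u) = (0 : X) := res.exact₀.apply_apply_eq_zero u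
      exact (congrArg (Submodule.Quotient.mk (p := Xsm res hp x)) h0).trans
        (Submodule.Quotient.mk_zero _)
  exact := by
    intro i zq
    obtain ⟨z, rfl⟩ := Submodule.Quotient.mk_surjective _ zq
    constructor
    · intro h
      erw [ModuleCat.ofHom_apply, Submodule.mapQ_apply] at h
      rw [Submodule.Quotient.mk_eq_zero] at h
      have hlift : ∃ u ∈ Psm res hp x (i + 1), res.d i u = res.d i z := by
        cases i with
        | zero => exact sub_exact_lift0 res hp h (res.exact₀.apply_apply_eq_zero z)
        | succ j => exact sub_exact_lift res hp h ((res.exact j).apply_apply_eq_zero z)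
      obtain ⟨u, humem, hu⟩ := hlift
      have hker : res.d i (z - u) = 0 := by
        rw [map_sub, hu, sub_self]
      obtain ⟨v, hv⟩ := (res.exact i _).mp hker
      refine ⟨Submodule.Quotient.mk v, ?_⟩
      erw [ModuleCat.ofHom_apply, Submodule.mapQ_apply]
      rw [hv, Submodule.Quotient.eq]
      simpa using Submodule.neg_mem _ humem
    · rintro ⟨uq, huq⟩
      obtain ⟨u, rfl⟩ := Submodule.Quotient.mk_surjective _ uq
      rw [← huq]
      erw [ModuleCat.ofHom_apply, Submodule.mapQ_apply]
      have h0 : res.d i (res.d (i + 1) u) = 0 := (res.exact i).apply_apply_eq_zero u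
      exact (congrArg (Submodule.Quotient.mk (p := Psm res hp x i)) h0).trans
        (Submodule.Quotient.mk_zero _)
  bounded := by
    intro i hi
    have := res.bounded i hi
    exact subsingleton_quotient _

end Main

end SmallProjAux

/-- If `X` is a left `R`-module of projective dimension at most `n` and `x ∈ X`, then
there is a submodule `X' ⊆ X` containing `x`, of cardinality at most `κ` (where `κ` is
any infinite cardinal with `κ ≥ card R`), such that both `X'` and `X/X'` have projective
dimension at most `n`. -/
theorem small_nProjective_submodule (R : Type) [Ring R] (n : ℕ) (κ : Cardinal)
    (hκ : Cardinal.aleph0 ≤ κ) (hκR : Cardinal.mk R ≤ κ)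
    (X : Type) [AddCommGroup X] [Module R X]
    (hX : HasProjDimLE R n (ModuleCat.of R X)) (x : X) :
    ∃ X' : Submodule R X, x ∈ X' ∧ Cardinal.mk X' ≤ κ ∧
      HasProjDimLE R n (ModuleCat.of R X') ∧
      HasProjDimLE R n (ModuleCat.of R (X ⧸ X')) := by
  obtain ⟨res, hp⟩ := hX
  refine ⟨SmallProjAux.Xsm res hp x, SmallProjAux.x_mem_Xsm res hp x,
    SmallProjAux.mk_Xsm_le res hp hκ hκR x,
    ⟨SmallProjAux.subRes res hp x, fun i => SmallProjAux.projective_Psm res hp x i⟩,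
    ⟨SmallProjAux.quotRes res hp x, fun i => SmallProjAux.projective_quot_Psm res hp x i⟩⟩
end
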